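/- arXiv:2111.12850 — 6 statements merged into one kernel-verified Lean document; each statement's English description precedes it below -/
import Mathlib

section
/- For any positive integer n and any probability p ∈ [0,1], the expected number of random-direction parking functions equals (n+1)^{n-1}; that is, the sum over all α ∈ {1,...,n}^n of the probability that α parks in the random-direction model equals (n+1)^{n-1}. -/
/-- The first spot in the list `l` not in `occ`, if any. -/
def firstFree (occ : Finset ℕ) (l : List ℕ) : Option ℕ :=
  l.find? (fun s => decide (s ∉ occ))

/-- Run a parking simulation: each car is a pair (preference, coin); `step`
decides where a car parks (or `none` if it fails). Returns `true` iff all cars park. -/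
def runPark (step : Finset ℕ → ℕ → Bool → Option ℕ) :
    List (ℕ × Bool) → Finset ℕ → Bool
  | [], _ => true
  | (a, b) :: rest, occ =>
    match step occ a b with
    | none => false
    | some s => runPark step rest (insert s occ)

/-- Run a parking simulation, returning the final set of occupied spots
(cars that fail to park simply do not park). -/
def runOcc (step : Finset ℕ → ℕ → Bool → Option ℕ) :
    List (ℕ × Bool) → Finset ℕ → Finset ℕ
  | [], occ => occ
  | (a, b) :: rest, occ =>
    match step occ a b with
    | none => runOcc step rest occ
    | some s => runOcc step rest (insert s occ)

/-- Random-direction step on spots `1,…,n`: if the preferred spot `a` is free, take it;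
otherwise if the coin says forward, take the first free spot among `a+1,…,n`;
otherwise take the first free spot among `a-1,…,1`. -/
def dirStep (n : ℕ) (occ : Finset ℕ) (a : ℕ) (fwd : Bool) : Option ℕ :=
  if a ∉ occ then some a
  else if fwd then firstFree occ (List.range' (a + 1) (n - a))
  else firstFree occ ((List.range' 1 (a - 1)).reverse)

/-- Random `k`-Naples step on spots `1,…,n`: if the preferred spot `a` is free, take it;
otherwise, if the coin says to back up, check spots `a-1, a-2, …, max(a-k,1)` one by one
taking the first free one; if none (or if the coin says not to back up), take the first
free spot among `a+1,…,n`. -/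
def naplesStep (n k : ℕ) (occ : Finset ℕ) (a : ℕ) (back : Bool) : Option ℕ :=
  if a ∉ occ then some a
  else
    let fwd := firstFree occ (List.range' (a + 1) (n - a))
    if back then
      match firstFree occ ((List.range' (max (a - k) 1) (min k (a - 1))).reverse) with
      | some s => some s
      | none => fwd
    else fwd

/-- Circular random-direction step on spots `1,…,n+1` arranged in a circle:
if the preferred spot `a` is free, take it; otherwise search clockwise
(`a+1, a+2, …` wrapping around) or counterclockwise according to the coin. -/
def circStep (n : ℕ) (occ : Finset ℕ) (a : ℕ) (cw : Bool) : Option ℕ :=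
  if a ∉ occ then some a
  else if cw then
    firstFree occ (List.range' (a + 1) (n + 1 - a) ++ List.range' 1 (a - 1))
  else
    firstFree occ ((List.range' 1 (a - 1)).reverse ++ (List.range' (a + 1) (n + 1 - a)).reverse)

/-- Whether all `n` cars with preferences `α` park in the random-direction model on spots
`1,…,n` with coins `b` (`b i = true` means car `i` searches forward when its spot is taken). -/
def parksDir (n : ℕ) (α : Fin n → ℕ) (b : Fin n → Bool) : Bool :=
  runPark (dirStep n) (List.ofFn (fun i => (α i, b i))) ∅

/-- Whether all `n` cars with preferences `α` park in the `k`-Naples model on spots `1,…,n`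
with coins `b` (`b i = true` means car `i` backs up when its spot is taken). -/
def parksNaples (n k : ℕ) (α : Fin n → ℕ) (b : Fin n → Bool) : Bool :=
  runPark (naplesStep n k) (List.ofFn (fun i => (α i, b i))) ∅

/-- The probability that all cars park in the random-direction model, where each car
whose spot is taken independently searches forward with probability `p` and backward
with probability `1 - p`. -/
noncomputable def probDir (n : ℕ) (p : ℝ) (α : Fin n → ℕ) : ℝ :=
  ∑ b : Fin n → Bool,
    (∏ i, if b i then p else 1 - p) * (if parksDir n α b then 1 else 0)

/-- The probability that all cars park in the random `k`-Naples model, where each car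
whose spot is taken independently backs up (up to) `k` spots with probability `p`. -/
noncomputable def probNaples (n k : ℕ) (p : ℝ) (α : Fin n → ℕ) : ℝ :=
  ∑ b : Fin n → Bool,
    (∏ i, if b i then p else 1 - p) * (if parksNaples n k α b then 1 else 0)

/-- The deterministic 1-Naples simulation for choices `β = (β₂,…,βₙ) ∈ {0,1}^{n-1}`:
car `i ≥ 2` backs up one spot first iff `β i = false` (i.e. `βᵢ = 0`); car 1's choice
is irrelevant since its preferred spot is always free. -/
def parksUnder (n : ℕ) (α : Fin n → ℕ) (β : Fin (n - 1) → Bool) : Bool :=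
  parksNaples n 1 α
    (fun i => if h : 0 < i.1 then !(β ⟨i.1 - 1, by have := i.2; omega⟩) else false)

/-- `g α`: the number of choice sequences `β ∈ {0,1}^{n-1}` under which `α` parks in the
deterministic 1-Naples simulation. -/
def g (n : ℕ) (α : Fin n → ℕ) : ℕ :=
  (Finset.univ.filter (fun β : Fin (n - 1) → Bool => parksUnder n α β = true)).card

/-- `α` is a parking function: every car parks when each car whose preferred spot is taken
only searches forward. -/
def forwardParks (n : ℕ) (α : Fin n → ℕ) : Bool :=
  parksNaples n 0 α (fun _ => false)

/-- `α` is a 1-Naples parking function: every car parks when each car whose preferred spot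
is taken always backs up one spot first. -/
def naplesParks (n : ℕ) (α : Fin n → ℕ) : Bool :=
  parksNaples n 1 α (fun _ => true)

/-- The expected number of random `k`-Naples parking functions on `n` cars. -/
noncomputable def T (k : ℕ) (p : ℝ) (n : ℕ) : ℝ :=
  ∑ α : Fin n → Fin n, probNaples n k p (fun i => (α i).1 + 1)

/-- The staircase preference list: `m t` copies of `t`, then `m (t-1)` copies of `t-1`,
…, down to `m 2` copies of `2`. -/
def stair (t : ℕ) (m : ℕ → ℕ) : List ℕ :=
  ((List.range' 2 (t - 1)).reverse).flatMap (fun j => List.replicate (m j) j)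

/-- The staircase condition on a preference tuple: `α₁ = α₂`, each entry decreases by
`0` or `1`, and `αₙ = 2`. -/
def Staircase {n : ℕ} (hn : 2 ≤ n) (α : Fin n → ℕ) : Prop :=
  α ⟨0, by omega⟩ = α ⟨1, by omega⟩ ∧
  (∀ i : ℕ, (h : i + 1 < n) →
    α ⟨i + 1, h⟩ = α ⟨i, by omega⟩ ∨ α ⟨i + 1, h⟩ + 1 = α ⟨i, by omega⟩) ∧
  α ⟨n - 1, by omega⟩ = 2

/-- The number of 1-Naples parking functions on `n` cars. -/
def Nnum (n : ℕ) : ℕ :=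
  (Finset.univ.filter
    (fun α : Fin n → Fin n => naplesParks n (fun i => (α i).1 + 1) = true)).card
namespace Stmt0Aux

open Finset

/-- Rotation of the circle spot labels `1, …, n+1`. -/
def rot (n a : ℕ) : ℕ := if a = n + 1 then 1 else a + 1

lemma rot_mem {n a : ℕ} (h : a ∈ Finset.Icc 1 (n + 1)) :
    rot n a ∈ Finset.Icc 1 (n + 1) := by
  simp only [Finset.mem_Icc] at *; unfold rot; split <;> omega

lemma rot_inj {n a b : ℕ} (ha : a ∈ Finset.Icc 1 (n + 1)) (hb : b ∈ Finset.Icc 1 (n + 1))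
    (h : rot n a = rot n b) : a = b := by
  simp only [Finset.mem_Icc] at ha hb
  unfold rot at h; split at h <;> split at h <;> omega

lemma rot_mem_image {n a : ℕ} {occ : Finset ℕ} (ha : a ∈ Finset.Icc 1 (n + 1))
    (hocc : occ ⊆ Finset.Icc 1 (n + 1)) :
    rot n a ∈ occ.image (rot n) ↔ a ∈ occ := by
  constructor
  · intro h
    obtain ⟨x, hx, hxa⟩ := Finset.mem_image.1 h
    rwa [rot_inj (hocc hx) ha hxa] at hx
  · exact fun h => Finset.mem_image_of_mem _ h

lemma firstFree_congr_map (f : ℕ → ℕ) (occ occ' : Finset ℕ) :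
    ∀ l : List ℕ, (∀ s ∈ l, (s ∈ occ ↔ f s ∈ occ')) →
    firstFree occ' (l.map f) = (firstFree occ l).map f := by
  intro l
  induction l with
  | nil => intro _; rfl
  | cons s t ih =>
    intro hl
    have hs := hl s List.mem_cons_self
    have hd : (decide (f s ∉ occ')) = (decide (s ∉ occ)) := by
      simp only [decide_not]
      exact congrArg (fun x => !x) (decide_eq_decide.2 hs.symm)
    simp only [firstFree, List.map_cons, List.find?_cons] at *
    rw [hd]
    cases hmem : decide (s ∉ occ) with
    | false => exact ih (fun x hx => hl x (List.mem_cons_of_mem _ hx))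
    | true => rfl

/-- The clockwise search list starting after `a`. -/
def cwL (n a : ℕ) : List ℕ := List.range' (a + 1) (n + 1 - a) ++ List.range' 1 (a - 1)

lemma mem_cwL {n a s : ℕ} (h1 : 1 ≤ a) (h2 : a ≤ n + 1) :
    s ∈ cwL n a ↔ (1 ≤ s ∧ s ≤ n + 1 ∧ s ≠ a) := by
  simp only [cwL, List.mem_append, List.mem_range'_1]; omega

lemma map_rot_range' {n s k : ℕ} (h1 : 1 ≤ s) (h : s + k ≤ n + 1) :
    (List.range' s k).map (rot n) = List.range' (s + 1) k := by
  have h2 : ∀ x ∈ List.range' s k, rot n x = 1 + x := by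
    intro x hx
    rw [List.mem_range'_1] at hx
    unfold rot; split <;> omega
  rw [List.map_congr_left h2, List.map_add_range']
  congr 1; omega

lemma circStep_eq (n : ℕ) (occ : Finset ℕ) (a : ℕ) (cw : Bool) :
    circStep n occ a cw =
      if a ∉ occ then some a
      else firstFree occ (if cw then cwL n a else (cwL n a).reverse) := by
  unfold circStep cwL
  by_cases h : a ∉ occ
  · simp [h]
  · simp only [if_neg h]
    cases cw
    · simp [List.reverse_append]
    · simp

lemma cwL_rot {n a : ℕ} (h1 : 1 ≤ a) (h2 : a ≤ n + 1) :
    cwL n (rot n a) = (cwL n a).map (rot n) := by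
  by_cases ha : a = n + 1
  · subst ha
    have e1 : rot n (n + 1) = 1 := by unfold rot; simp
    rw [e1]
    unfold cwL
    rw [show n + 1 - (n + 1) = 0 from by omega, show n + 1 - 1 = n from by omega,
      show (1:ℕ) - 1 = 0 from rfl]
    simp only [List.range'_zero, List.append_nil, List.nil_append, List.map_nil]
    rw [map_rot_range' le_rfl (by omega)]
  · have ha' : a ≤ n := by omega
    have e1 : rot n a = a + 1 := by unfold rot; simp [ha]
    rw [e1]
    unfold cwL
    have e2 : List.range' (a + 1) (n + 1 - a) = List.range' (a + 1) (n - a) ++ [n + 1] := by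
      rw [show n + 1 - a = (n - a) + 1 from by omega, List.range'_concat]
      congr 2; omega
    rw [e2]
    rw [List.map_append, List.map_append, map_rot_range' (by omega) (by omega),
      map_rot_range' le_rfl (by omega)]
    have e3 : List.map (rot n) [n + 1] = [1] := by
      simp [rot]
    rw [e3]
    rw [show n + 1 - (a + 1) = n - a from by omega, show a + 1 - 1 = a from by omega]
    rw [List.append_assoc]
    congr 1
    rw [show a = (a - 1) + 1 from by omega, List.range'_succ]
    rfl

lemma firstFree_some {occ : Finset ℕ} {l : List ℕ} {s : ℕ} (h : firstFree occ l = some s) :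
    s ∈ l ∧ s ∉ occ := by
  refine ⟨List.mem_of_find?_eq_some h, ?_⟩
  have := List.find?_some h
  simpa using this

lemma firstFree_isSome {occ : Finset ℕ} {l : List ℕ} {s : ℕ} (hs : s ∈ l) (hso : s ∉ occ) :
    ∃ t, firstFree occ l = some t := by
  have : (firstFree occ l).isSome := by
    rw [firstFree, List.find?_isSome]
    exact ⟨s, hs, by simpa using hso⟩
  exact Option.isSome_iff_exists.1 this

lemma circStep_some_spec {n : ℕ} {occ : Finset ℕ} {a s : ℕ} {cw : Bool}
    (ha : a ∈ Finset.Icc 1 (n + 1)) (h : circStep n occ a cw = some s) :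
    s ∈ Finset.Icc 1 (n + 1) ∧ s ∉ occ := by
  rw [circStep_eq] at h
  by_cases hm : a ∉ occ
  · rw [if_pos hm] at h
    injection h with h'
    subst h'
    exact ⟨ha, hm⟩
  · rw [if_neg hm] at h
    have hff := firstFree_some h
    rw [Finset.mem_Icc] at ha
    have hmem : s ∈ cwL n a := by
      cases cw
      · simpa using hff.1
      · simpa using hff.1
    rw [mem_cwL ha.1 ha.2] at hmem
    exact ⟨Finset.mem_Icc.2 ⟨hmem.1, hmem.2.1⟩, hff.2⟩

lemma circStep_total {n : ℕ} {occ : Finset ℕ} {a : ℕ} (cw : Bool)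
    (hocc : occ ⊆ Finset.Icc 1 (n + 1)) (hcard : occ.card ≤ n)
    (ha : a ∈ Finset.Icc 1 (n + 1)) :
    ∃ s, circStep n occ a cw = some s := by
  rw [circStep_eq]
  by_cases hm : a ∉ occ
  · exact ⟨a, by rw [if_pos hm]⟩
  · rw [if_neg hm]
    push_neg at hm
    have hne : (Finset.Icc 1 (n + 1) \ occ).Nonempty := by
      rw [← Finset.card_pos, Finset.card_sdiff_of_subset hocc, Nat.card_Icc]
      omega
    obtain ⟨t, ht⟩ := hne
    rw [Finset.mem_sdiff] at ht
    have hta : t ≠ a := fun he => ht.2 (he ▸ hm)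
    rw [Finset.mem_Icc] at ht
    have htl : t ∈ cwL n a := by
      rw [Finset.mem_Icc] at ha
      rw [mem_cwL ha.1 ha.2]
      exact ⟨ht.1.1, ht.1.2, hta⟩
    cases cw
    · exact firstFree_isSome (by simpa using htl) ht.2
    · exact firstFree_isSome htl ht.2

lemma circStep_rot {n : ℕ} {occ : Finset ℕ} {a : ℕ} (cw : Bool)
    (hocc : occ ⊆ Finset.Icc 1 (n + 1)) (ha : a ∈ Finset.Icc 1 (n + 1)) :
    circStep n (occ.image (rot n)) (rot n a) cw = (circStep n occ a cw).map (rot n) := by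
  rw [circStep_eq, circStep_eq]
  have hiff : rot n a ∉ occ.image (rot n) ↔ a ∉ occ := not_congr (rot_mem_image ha hocc)
  by_cases hm : a ∉ occ
  · rw [if_pos hm, if_pos (hiff.2 hm)]; rfl
  · rw [if_neg hm, if_neg (fun hc => hm (hiff.1 hc))]
    rw [Finset.mem_Icc] at ha
    have hmemiff : ∀ s ∈ (if cw then cwL n a else (cwL n a).reverse),
        (s ∈ occ ↔ rot n s ∈ occ.image (rot n)) := by
      intro s hs
      have hs' : s ∈ cwL n a := by
        cases cw
        · simpa using hs
        · simpa using hs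
      rw [mem_cwL ha.1 ha.2] at hs'
      exact (rot_mem_image (Finset.mem_Icc.2 ⟨hs'.1, hs'.2.1⟩) hocc).symm
    have hlist : (if cw then cwL n (rot n a) else (cwL n (rot n a)).reverse) =
        (if cw then cwL n a else (cwL n a).reverse).map (rot n) := by
      cases cw
      · simp only [if_neg Bool.false_ne_true, Bool.false_eq_true, ite_false]
        rw [cwL_rot ha.1 ha.2, List.map_reverse]
      · simp only [ite_true]
        exact cwL_rot ha.1 ha.2
    rw [hlist]
    exact firstFree_congr_map _ _ _ _ hmemiff

lemma runOcc_mono (step : Finset ℕ → ℕ → Bool → Option ℕ) :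
    ∀ (L : List (ℕ × Bool)) (occ : Finset ℕ), occ ⊆ runOcc step L occ := by
  intro L
  induction L with
  | nil => intro occ; exact Finset.Subset.refl occ
  | cons hd tl ih =>
    intro occ
    obtain ⟨a, c⟩ := hd
    show occ ⊆ runOcc step ((a, c) :: tl) occ
    rw [runOcc]
    cases hstep : step occ a c with
    | none => exact ih occ
    | some s => exact (Finset.subset_insert s occ).trans (ih (insert s occ))

lemma runOcc_circ_invariant (n : ℕ) :
    ∀ L : List (ℕ × Bool), (∀ q ∈ L, q.1 ∈ Finset.Icc 1 (n + 1)) →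
    ∀ occ, occ ⊆ Finset.Icc 1 (n + 1) → occ.card + L.length ≤ n + 1 →
      runOcc (circStep n) L occ ⊆ Finset.Icc 1 (n + 1) ∧
      (runOcc (circStep n) L occ).card = occ.card + L.length := by
  intro L
  induction L with
  | nil => intro _ occ hsub _; exact ⟨hsub, by rw [runOcc]; simp⟩
  | cons hd tl ih =>
    intro hq occ hsub hlen
    obtain ⟨a, c⟩ := hd
    have ha : a ∈ Finset.Icc 1 (n + 1) := hq (a, c) List.mem_cons_self
    have hcard : occ.card ≤ n := by simp at hlen; omega
    obtain ⟨s, hs⟩ := circStep_total c hsub hcard ha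
    have hspec := circStep_some_spec ha hs
    rw [runOcc, hs]
    have hsub' : insert s occ ⊆ Finset.Icc 1 (n + 1) :=
      Finset.insert_subset hspec.1 hsub
    have hcard' : (insert s occ).card = occ.card + 1 := Finset.card_insert_of_notMem hspec.2
    have := ih (fun q hqm => hq q (List.mem_cons_of_mem _ hqm)) (insert s occ) hsub'
      (by simp at hlen ⊢; omega)
    refine ⟨this.1, ?_⟩
    rw [this.2, hcard']; simp; omega

lemma runOcc_circ_rot (n : ℕ) :
    ∀ L : List (ℕ × Bool), (∀ q ∈ L, q.1 ∈ Finset.Icc 1 (n + 1)) →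
    ∀ occ, occ ⊆ Finset.Icc 1 (n + 1) →
      runOcc (circStep n) (L.map (fun q => (rot n q.1, q.2))) (occ.image (rot n)) =
      (runOcc (circStep n) L occ).image (rot n) := by
  intro L
  induction L with
  | nil => intro _ occ _; rfl
  | cons hd tl ih =>
    intro hq occ hsub
    obtain ⟨a, c⟩ := hd
    have ha : a ∈ Finset.Icc 1 (n + 1) := hq (a, c) List.mem_cons_self
    have hrot := circStep_rot (occ := occ) (a := a) c hsub ha
    simp only [List.map_cons]
    rw [runOcc, runOcc, hrot]
    cases hstep : circStep n occ a c with
    | none =>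
      simp only [Option.map_none]
      exact ih (fun q hqm => hq q (List.mem_cons_of_mem _ hqm)) occ hsub
    | some s =>
      simp only [Option.map_some]
      have hspec := circStep_some_spec ha hstep
      rw [← Finset.image_insert]
      exact ih (fun q hqm => hq q (List.mem_cons_of_mem _ hqm)) (insert s occ)
        (Finset.insert_subset hspec.1 hsub)

lemma pref_mem_runOcc (n : ℕ) :
    ∀ (L : List (ℕ × Bool)) (occ : Finset ℕ) (c : Bool),
      ((n + 1 : ℕ), c) ∈ L → (n + 1) ∈ runOcc (circStep n) L occ := by
  intro L
  induction L with
  | nil => intro occ c h; simp at h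
  | cons hd tl ih =>
    intro occ c hmem
    obtain ⟨a, d⟩ := hd
    rw [runOcc]
    rcases List.mem_cons.1 hmem with he | ht
    · have haeq : a = n + 1 := by
        have := congrArg Prod.fst he.symm
        simpa using this
      subst haeq
      by_cases hocc : (n + 1) ∈ occ
      · cases hstep : circStep n occ (n + 1) d with
        | none => exact runOcc_mono _ _ _ hocc
        | some s => exact runOcc_mono _ _ _ (Finset.mem_insert_of_mem hocc)
      · have hstep : circStep n occ (n + 1) d = some (n + 1) := by
          rw [circStep_eq, if_pos hocc]
        rw [hstep]
        exact runOcc_mono _ _ _ (Finset.mem_insert_self _ _)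
    · cases hstep : circStep n occ a d with
      | none => exact ih occ c ht
      | some s => exact ih (insert s occ) c ht

lemma nplus1_not_mem_occ {n : ℕ} {occ : Finset ℕ} (h : occ ⊆ Finset.Icc 1 n) :
    (n + 1) ∉ occ := by
  intro hc
  have := h hc
  rw [Finset.mem_Icc] at this
  omega

lemma dir_circ_step (n : ℕ) {occ : Finset ℕ} (hocc : occ ⊆ Finset.Icc 1 n)
    {a : ℕ} (ha : a ∈ Finset.Icc 1 n) (c : Bool) :
    (∃ s, dirStep n occ a c = some s ∧ circStep n occ a c = some s ∧ s ∈ Finset.Icc 1 n) ∨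
    (dirStep n occ a c = none ∧ circStep n occ a c = some (n + 1)) := by
  have hn1 : (n + 1) ∉ occ := nplus1_not_mem_occ hocc
  rw [Finset.mem_Icc] at ha
  unfold dirStep circStep
  by_cases hm : a ∉ occ
  · left
    exact ⟨a, by rw [if_pos hm], by rw [if_pos hm], Finset.mem_Icc.2 ha⟩
  · rw [if_neg hm, if_neg hm]
    have hsplit : List.range' (a + 1) (n + 1 - a) = List.range' (a + 1) (n - a) ++ [n + 1] := by
      rw [show n + 1 - a = (n - a) + 1 from by omega, List.range'_concat]
      congr 2; omega
    have hfree : (decide ((n + 1) ∉ occ)) = true := decide_eq_true hn1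
    cases c
    · -- backward
      simp only [Bool.false_eq_true, ite_false]
      rw [hsplit, List.reverse_append, List.reverse_singleton, List.singleton_append]
      simp only [firstFree, List.find?_append]
      cases hfd : List.find? (fun s => decide (s ∉ occ)) (List.range' 1 (a - 1)).reverse with
      | some s =>
        left
        have hmem : s ∈ List.range' 1 (a - 1) := by
          simpa using List.mem_of_find?_eq_some hfd
        rw [List.mem_range'_1] at hmem
        exact ⟨s, rfl, rfl, Finset.mem_Icc.2 ⟨by omega, by omega⟩⟩
      | none =>
        right
        refine ⟨rfl, ?_⟩
        rw [Option.none_or, List.find?_cons, hfree]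
    · -- forward
      simp only [ite_true]
      rw [hsplit, List.append_assoc, List.singleton_append]
      simp only [firstFree, List.find?_append]
      cases hfd : List.find? (fun s => decide (s ∉ occ)) (List.range' (a + 1) (n - a)) with
      | some s =>
        left
        have hmem : s ∈ List.range' (a + 1) (n - a) := List.mem_of_find?_eq_some hfd
        rw [List.mem_range'_1] at hmem
        exact ⟨s, rfl, rfl, Finset.mem_Icc.2 ⟨by omega, by omega⟩⟩
      | none =>
        right
        refine ⟨rfl, ?_⟩
        rw [Option.none_or, List.find?_cons, hfree]

lemma runPark_iff_circ (n : ℕ) :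
    ∀ L : List (ℕ × Bool), (∀ q ∈ L, q.1 ∈ Finset.Icc 1 n) →
    ∀ occ, occ ⊆ Finset.Icc 1 n →
      (runPark (dirStep n) L occ = true ∧ runOcc (circStep n) L occ ⊆ Finset.Icc 1 n) ∨
      (runPark (dirStep n) L occ = false ∧ (n + 1) ∈ runOcc (circStep n) L occ) := by
  intro L
  induction L with
  | nil => intro _ occ hsub; left; exact ⟨rfl, hsub⟩
  | cons hd tl ih =>
    intro hq occ hsub
    obtain ⟨a, c⟩ := hd
    have ha : a ∈ Finset.Icc 1 n := hq (a, c) List.mem_cons_self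
    rw [runPark, runOcc]
    rcases dir_circ_step n hsub ha c with ⟨s, hd1, hc1, hsI⟩ | ⟨hd1, hc1⟩
    · rw [hd1, hc1]
      exact ih (fun q hqm => hq q (List.mem_cons_of_mem _ hqm)) (insert s occ)
        (Finset.insert_subset hsI hsub)
    · rw [hd1, hc1]
      right
      exact ⟨rfl, runOcc_mono _ _ _ (Finset.mem_insert_self _ _)⟩


section Count

variable (n : ℕ) (b : Fin n → Bool)

/-- The list of (preference, coin) pairs for a preference tuple on the circle. -/
def Lc (α : Fin n → Fin (n + 1)) : List (ℕ × Bool) :=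
  List.ofFn (fun i => ((α i).1 + 1, b i))

/-- Final occupied set of the circular process. -/
def occF (α : Fin n → Fin (n + 1)) : Finset ℕ :=
  runOcc (circStep n) (Lc n b α) ∅

lemma Lc_prefs (α : Fin n → Fin (n + 1)) :
    ∀ q ∈ Lc n b α, q.1 ∈ Finset.Icc 1 (n + 1) := by
  intro q hq
  rw [Lc, List.mem_ofFn] at hq
  obtain ⟨i, rfl⟩ := hq
  have := (α i).isLt
  simp only [Finset.mem_Icc]
  omega

lemma Lc_length (α : Fin n → Fin (n + 1)) : (Lc n b α).length = n := by
  rw [Lc, List.length_ofFn]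

lemma occF_subset (α : Fin n → Fin (n + 1)) : occF n b α ⊆ Finset.Icc 1 (n + 1) :=
  (runOcc_circ_invariant n _ (Lc_prefs n b α) ∅ (by simp)
    (by rw [Lc_length]; simp)).1

lemma occF_card (α : Fin n → Fin (n + 1)) : (occF n b α).card = n := by
  have := (runOcc_circ_invariant n _ (Lc_prefs n b α) ∅ (by simp)
    (by rw [Lc_length]; simp)).2
  rw [occF, this, Lc_length]
  simp

lemma rot_val (x : Fin (n + 1)) : rot n (x.1 + 1) = (x + 1).1 + 1 := by
  rw [Fin.val_add_one]
  unfold rot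
  rcases eq_or_ne x (Fin.last n) with h | h
  · subst h; simp [Fin.val_last]
  · have hx : x.1 < n := by
      have h1 := x.isLt
      rcases Nat.lt_or_ge x.1 n with h' | h'
      · exact h'
      · exact absurd (Fin.ext (by simp [Fin.val_last]; omega)) h
    rw [if_neg (by omega), if_neg h]

lemma occF_rot (α : Fin n → Fin (n + 1)) :
    occF n b (fun i => α i + 1) = (occF n b α).image (rot n) := by
  have hmap : Lc n b (fun i => α i + 1) = (Lc n b α).map (fun q => (rot n q.1, q.2)) := by
    rw [Lc, Lc, List.map_ofFn]
    congr 1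
    funext i
    simp only [Function.comp]
    rw [Prod.mk.injEq]
    exact ⟨(rot_val n (α i)).symm, rfl⟩
  rw [occF, occF, hmap, show (∅ : Finset ℕ) = (∅ : Finset ℕ).image (rot n) from by simp]
  exact runOcc_circ_rot n _ (Lc_prefs n b α) ∅ (by simp)

/-- The set of preference tuples whose circular process leaves spot `s` empty. -/
def A (s : ℕ) : Finset (Fin n → Fin (n + 1)) :=
  Finset.univ.filter (fun α => s ∉ occF n b α)

lemma card_A_rot {s : ℕ} (hs : s ∈ Finset.Icc 1 (n + 1)) :
    (A n b s).card = (A n b (rot n s)).card := by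
  apply Finset.card_nbij' (fun α => (fun i => α i + 1)) (fun α => (fun i => α i - 1))
  · intro α hα
    simp only [A, Finset.mem_coe, Finset.mem_filter, Finset.mem_univ, true_and] at hα ⊢
    rw [occF_rot]
    intro hc
    exact hα ((rot_mem_image hs (occF_subset n b α)).1 hc)
  · intro β hβ
    simp only [A, Finset.mem_coe, Finset.mem_filter, Finset.mem_univ, true_and] at hβ ⊢
    intro hc
    apply hβ
    have hβe : β = fun i => (fun i => β i - 1) i + 1 := by funext i; simp
    rw [hβe, occF_rot]
    exact Finset.mem_image_of_mem _ hc
  · intro α _; funext i; simp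
  · intro β _; funext i; simp

lemma card_A_succ {s : ℕ} (h1 : 1 ≤ s) (h2 : s ≤ n) :
    (A n b (s + 1)).card = (A n b s).card := by
  have h := card_A_rot n b (s := s) (Finset.mem_Icc.2 ⟨h1, by omega⟩)
  rw [show rot n s = s + 1 from by unfold rot; rw [if_neg (by omega)]] at h
  exact h.symm

lemma card_A_eq_one : ∀ s : ℕ, 1 ≤ s → s ≤ n + 1 → (A n b s).card = (A n b 1).card := by
  intro s
  induction s with
  | zero => intro h _; omega
  | succ k ih =>
    intro _ h2
    rcases Nat.eq_zero_or_pos k with hk | hk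
    · subst hk; rfl
    · rw [card_A_succ n b hk (by omega)]
      exact ih hk (by omega)

lemma sum_card_A : ∑ s ∈ Finset.Icc 1 (n + 1), (A n b s).card = (n + 1) ^ n := by
  calc ∑ s ∈ Finset.Icc 1 (n + 1), (A n b s).card
      = ∑ s ∈ Finset.Icc 1 (n + 1), ∑ α : Fin n → Fin (n + 1),
          if s ∉ occF n b α then 1 else 0 :=
        Finset.sum_congr rfl (fun s _ => Finset.card_filter _ _)
    _ = ∑ α : Fin n → Fin (n + 1), ∑ s ∈ Finset.Icc 1 (n + 1),
          if s ∉ occF n b α then 1 else 0 := Finset.sum_comm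
    _ = ∑ _α : Fin n → Fin (n + 1), 1 := by
        refine Finset.sum_congr rfl (fun α _ => ?_)
        rw [← Finset.card_filter, ← Finset.sdiff_eq_filter,
          Finset.card_sdiff_of_subset (occF_subset n b α), occF_card, Nat.card_Icc]
        omega
    _ = (n + 1) ^ n := by
        rw [Finset.sum_const, smul_eq_mul, mul_one, Finset.card_univ,
          Fintype.card_fun, Fintype.card_fin, Fintype.card_fin]

lemma card_A_last (hn : 0 < n) : (A n b (n + 1)).card = (n + 1) ^ (n - 1) := by
  have h1 : ∑ s ∈ Finset.Icc 1 (n + 1), (A n b s).card = (n + 1) * (A n b 1).card := by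
    rw [Finset.sum_congr rfl
      (fun s hs => card_A_eq_one n b s (Finset.mem_Icc.1 hs).1 (Finset.mem_Icc.1 hs).2)]
    rw [Finset.sum_const, Nat.card_Icc, smul_eq_mul]
    congr 1
  have h2 := sum_card_A n b
  have h3 : (A n b (n + 1)).card = (A n b 1).card :=
    card_A_eq_one n b (n + 1) (by omega) le_rfl
  have h4 : (n + 1) ^ n = (n + 1) * (n + 1) ^ (n - 1) := by
    obtain ⟨m, rfl⟩ : ∃ m, n = m + 1 := ⟨n - 1, by omega⟩
    rw [show m + 1 - 1 = m from rfl, pow_succ']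
  rw [h3]
  apply Nat.eq_of_mul_eq_mul_left (show 0 < n + 1 by omega)
  rw [← h1, h2, h4]

lemma card_A_bridge :
    (Finset.univ.filter (fun α : Fin n → Fin n =>
      parksDir n (fun i => (α i).1 + 1) b = true)).card = (A n b (n + 1)).card := by
  apply Finset.card_bij (fun α _ => (fun i => (α i).castSucc))
  · intro α hα
    simp only [Finset.mem_filter, Finset.mem_univ, true_and] at hα
    simp only [A, Finset.mem_filter, Finset.mem_univ, true_and]
    have hpref : ∀ q ∈ Lc n b (fun i => (α i).castSucc), q.1 ∈ Finset.Icc 1 n := by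
      intro q hq
      rw [Lc, List.mem_ofFn] at hq
      obtain ⟨i, rfl⟩ := hq
      have := (α i).isLt
      simp only [Finset.mem_Icc, Fin.coe_castSucc]
      omega
    rcases runPark_iff_circ n _ hpref ∅ (by simp) with ⟨_, hsub⟩ | ⟨hfail, _⟩
    · exact nplus1_not_mem_occ hsub
    · rw [show runPark (dirStep n) (Lc n b (fun i => (α i).castSucc)) ∅ =
          parksDir n (fun i => (α i).1 + 1) b from rfl] at hfail
      rw [hα] at hfail
      exact absurd hfail (by simp)
  · intro α _ α' _ h
    funext i
    exact Fin.castSucc_injective n (congrFun h i)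
  · intro β hβ
    simp only [A, Finset.mem_filter, Finset.mem_univ, true_and] at hβ
    have hlt : ∀ i, (β i).1 < n := by
      intro i
      by_contra hcon
      have heq : (β i).1 = n := by have := (β i).isLt; omega
      apply hβ
      apply pref_mem_runOcc n (Lc n b β) ∅ (b i)
      rw [Lc, List.mem_ofFn]
      exact ⟨i, by simp [heq]⟩
    refine ⟨fun i => ⟨(β i).1, hlt i⟩, ?_, ?_⟩
    · simp only [Finset.mem_filter, Finset.mem_univ, true_and]
      have hpref : ∀ q ∈ Lc n b β, q.1 ∈ Finset.Icc 1 n := by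
        intro q hq
        rw [Lc, List.mem_ofFn] at hq
        obtain ⟨i, rfl⟩ := hq
        have := hlt i
        simp only [Finset.mem_Icc]
        omega
      rcases runPark_iff_circ n _ hpref ∅ (by simp) with ⟨hpark, _⟩ | ⟨_, hmem⟩
      · exact hpark
      · exact absurd hmem hβ
    · funext i
      exact Fin.ext rfl

end Count

end Stmt0Aux
/-- For any positive `n` and `p ∈ [0,1]`, the expected number of random-direction
parking functions equals `(n+1)^(n-1)`. -/
theorem stmt0 (n : ℕ) (hn : 0 < n) (p : ℝ) (hp0 : 0 ≤ p) (hp1 : p ≤ 1) :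
    ∑ α : Fin n → Fin n, probDir n p (fun i => (α i).1 + 1) = (n + 1 : ℝ) ^ (n - 1) := by
  classical
  have key : ∀ bb : Fin n → Bool,
      (Finset.univ.filter (fun α : Fin n → Fin n =>
        parksDir n (fun i => (α i).1 + 1) bb = true)).card = (n + 1) ^ (n - 1) := by
    intro bb
    rw [Stmt0Aux.card_A_bridge n bb]
    exact Stmt0Aux.card_A_last n bb hn
  unfold probDir
  rw [Finset.sum_comm]
  have step1 : ∀ bb : Fin n → Bool,
      (∑ α : Fin n → Fin n, (∏ i, if bb i then p else 1 - p) *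
        (if parksDir n (fun i => (α i).1 + 1) bb then (1 : ℝ) else 0)) =
      (∏ i, if bb i then p else 1 - p) * ((n : ℝ) + 1) ^ (n - 1) := by
    intro bb
    rw [← Finset.mul_sum]
    congr 1
    rw [Finset.sum_boole, key bb]
    push_cast
    ring
  rw [Finset.sum_congr rfl (fun bb _ => step1 bb), ← Finset.sum_mul]
  have wsum : (∑ bb : Fin n → Bool, ∏ i, if bb i then p else 1 - p) = 1 := by
    have h := Finset.prod_univ_sum (fun _ : Fin n => (Finset.univ : Finset Bool))
      (fun _ x => if x then p else 1 - p)
    rw [Fintype.piFinset_univ] at h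
    rw [← h]
    have hone : ∀ i : Fin n, (∑ j : Bool, if j = true then p else 1 - p) = 1 := by
      intro i
      rw [Fintype.sum_bool]
      norm_num
    rw [Finset.prod_congr rfl (fun i _ => hone i), Finset.prod_const_one]
  rw [wsum, one_mul]
end

section
/- In the random-direction parking model, if α ∈ {1,...,n}^n is a permutation of (1,2,...,n), then the probability that α parks equals 1; otherwise the probability that α parks is strictly between 0 and 1. -/
section Aux

lemma firstFree_some' {occ : Finset ℕ} {l : List ℕ} {s : ℕ}
    (h : firstFree occ l = some s) : s ∈ l ∧ s ∉ occ := by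
  refine ⟨List.mem_of_find?_eq_some h, ?_⟩
  have := List.find?_some h
  simpa using this

lemma firstFree_exists {occ : Finset ℕ} {l : List ℕ} {s : ℕ}
    (hs : s ∈ l) (hocc : s ∉ occ) : ∃ t, firstFree occ l = some t := by
  cases hft : firstFree occ l with
  | some t => exact ⟨t, rfl⟩
  | none =>
    rw [firstFree, List.find?_eq_none] at hft
    have := hft s hs
    simp [hocc] at this

lemma dirStep_free {n : ℕ} {occ : Finset ℕ} {a : ℕ} (b : Bool) (h : a ∉ occ) :
    dirStep n occ a b = some a := by simp [dirStep, h]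

lemma dirStep_some {n : ℕ} {occ : Finset ℕ} {a s : ℕ} {b : Bool}
    (ha : a ∈ Finset.Icc 1 n) (h : dirStep n occ a b = some s) :
    s ∉ occ ∧ s ∈ Finset.Icc 1 n ∧ (b = true → a ≤ s) ∧ (b = false → s ≤ a) := by
  rw [Finset.mem_Icc] at ha
  by_cases hm : a ∈ occ
  · rw [dirStep] at h
    simp only [hm, not_true_eq_false, if_false] at h
    cases b with
    | true =>
      simp only [if_true] at h
      obtain ⟨hmem, hno⟩ := firstFree_some' h
      rw [List.mem_range'_1] at hmem
      exact ⟨hno, Finset.mem_Icc.2 ⟨by omega, by omega⟩, fun _ => by omega, by simp⟩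
    | false =>
      simp only [Bool.false_eq_true, if_false] at h
      obtain ⟨hmem, hno⟩ := firstFree_some' h
      rw [List.mem_reverse, List.mem_range'_1] at hmem
      exact ⟨hno, Finset.mem_Icc.2 ⟨by omega, by omega⟩, by simp, fun _ => by omega⟩
  · rw [dirStep_free b hm] at h
    obtain rfl : a = s := by injection h
    exact ⟨hm, Finset.mem_Icc.2 ha, fun _ => le_refl _, fun _ => le_refl _⟩

lemma runPark_nodup (n : ℕ) : ∀ (l : List (ℕ × Bool)) (occ : Finset ℕ),
    (l.map Prod.fst).Nodup → (∀ x ∈ l, x.1 ∉ occ) →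
    runPark (dirStep n) l occ = true
  | [], occ, _, _ => rfl
  | (a, b) :: rest, occ, hnd, hdis => by
    rw [runPark, dirStep_free b (hdis (a, b) (by simp))]
    simp only [List.map_cons, List.nodup_cons] at hnd
    exact runPark_nodup n rest (insert a occ) hnd.2 (fun x hx => by
      simp only [Finset.mem_insert, not_or]
      exact ⟨fun he => hnd.1 (he ▸ List.mem_map_of_mem (f := Prod.fst) hx),
        hdis x (List.mem_cons_of_mem _ hx)⟩)

lemma exists_coins (n : ℕ) : ∀ (l : List ℕ) (occ : Finset ℕ),
    occ ⊆ Finset.Icc 1 n → (∀ a ∈ l, a ∈ Finset.Icc 1 n) →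
    occ.card + l.length ≤ n →
    ∃ bs : List Bool, bs.length = l.length ∧
      runPark (dirStep n) (l.zip bs) occ = true
  | [], occ, _, _, _ => ⟨[], rfl, rfl⟩
  | a :: l, occ, hocc, hl, hcard => by
    have ha : a ∈ Finset.Icc 1 n := hl a (by simp)
    by_cases hm : a ∈ occ
    · -- find a free spot s
      have hlt : occ.card < n := by
        simp only [List.length_cons] at hcard; omega
      have hns : ¬ (Finset.Icc 1 n ⊆ occ) := by
        intro hsub
        have := Finset.card_le_card hsub
        rw [Nat.card_Icc] at this
        omega
      obtain ⟨s, hsI, hso⟩ := Finset.not_subset.1 hns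
      have hsa : s ≠ a := fun h => hso (h ▸ hm)
      rw [Finset.mem_Icc] at hsI ha
      rcases lt_or_gt_of_ne hsa with hlt' | hgt'
      · -- s < a : go backward
        have hmem : s ∈ (List.range' 1 (a - 1)).reverse := by
          rw [List.mem_reverse, List.mem_range'_1]; omega
        obtain ⟨t, hft⟩ := firstFree_exists hmem hso
        have hstep : dirStep n occ a false = some t := by
          rw [dirStep]; simp only [hm, not_true_eq_false, if_false,
            Bool.false_eq_true]; exact hft
        obtain ⟨htno, htI, -, -⟩ := dirStep_some (Finset.mem_Icc.2 ha) hstep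
        obtain ⟨bs, hbl, hrun⟩ := exists_coins n l (insert t occ)
          (Finset.insert_subset htI hocc) (fun x hx => hl x (by simp [hx]))
          (by rw [Finset.card_insert_of_notMem htno]
              simp only [List.length_cons] at hcard; omega)
        refine ⟨false :: bs, by simp [hbl], ?_⟩
        rw [List.zip_cons_cons, runPark, hstep]
        exact hrun
      · -- a < s : go forward
        have hmem : s ∈ List.range' (a + 1) (n - a) := by
          rw [List.mem_range'_1]; omega
        obtain ⟨t, hft⟩ := firstFree_exists hmem hso
        have hstep : dirStep n occ a true = some t := by
          rw [dirStep]; simp only [hm, not_true_eq_false, if_false, if_true]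
          exact hft
        obtain ⟨htno, htI, -, -⟩ := dirStep_some (Finset.mem_Icc.2 ha) hstep
        obtain ⟨bs, hbl, hrun⟩ := exists_coins n l (insert t occ)
          (Finset.insert_subset htI hocc) (fun x hx => hl x (by simp [hx]))
          (by rw [Finset.card_insert_of_notMem htno]
              simp only [List.length_cons] at hcard; omega)
        refine ⟨true :: bs, by simp [hbl], ?_⟩
        rw [List.zip_cons_cons, runPark, hstep]
        exact hrun
    · obtain ⟨bs, hbl, hrun⟩ := exists_coins n l (insert a occ)
        (Finset.insert_subset ha hocc) (fun x hx => hl x (by simp [hx]))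
        (by rw [Finset.card_insert_of_notMem hm]
            simp only [List.length_cons] at hcard; omega)
      refine ⟨true :: bs, by simp [hbl], ?_⟩
      rw [List.zip_cons_cons, runPark, dirStep_free true hm]
      exact hrun

lemma runPark_forward (n : ℕ) : ∀ (l : List (ℕ × Bool)) (occ : Finset ℕ),
    (∀ x ∈ l, x.2 = true) → (∀ x ∈ l, x.1 ∈ Finset.Icc 1 n) →
    occ ⊆ Finset.Icc 1 n → runPark (dirStep n) l occ = true →
    ∃ F : Finset ℕ, occ ⊆ F ∧ F ⊆ Finset.Icc 1 n ∧
      F.card = occ.card + l.length ∧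
      occ.sum id + (l.map Prod.fst).sum ≤ F.sum id ∧
      (F.sum id = occ.sum id + (l.map Prod.fst).sum →
        (l.map Prod.fst).Nodup ∧ ∀ x ∈ l, x.1 ∉ occ)
  | [], occ, _, _, hsub, _ =>
    ⟨occ, le_refl _, hsub, by simp, by simp, fun _ => by simp⟩
  | (a, b) :: rest, occ, hb, hI, hsub, hrun => by
    obtain rfl : b = true := hb (a, b) (by simp)
    rw [runPark] at hrun
    cases hstep : dirStep n occ a true with
    | none => rw [hstep] at hrun; simp at hrun
    | some s =>
      rw [hstep] at hrun
      obtain ⟨hsno, hsI, hge, -⟩ := dirStep_some (hI (a, true) (by simp)) hstep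
      have has := hge rfl
      obtain ⟨F, hsubF, hFI, hcard, hsum, heqc⟩ := runPark_forward n rest
        (insert s occ) (fun x hx => hb x (by simp [hx]))
        (fun x hx => hI x (by simp [hx])) (Finset.insert_subset hsI hsub) hrun
      have hins : (insert s occ).sum id = s + occ.sum id :=
        Finset.sum_insert hsno
      refine ⟨F, fun x hx => hsubF (by simp [hx]), hFI, ?_, ?_, ?_⟩
      · rw [hcard, Finset.card_insert_of_notMem hsno]; simp; omega
      · simp only [List.map_cons, List.sum_cons]
        rw [hins] at hsum; omega
      · intro heq
        simp only [List.map_cons, List.sum_cons] at heq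
        rw [hins] at hsum
        have hsa : s = a := by omega
        subst hsa
        obtain ⟨hnd, hnm⟩ := heqc (by rw [hins]; omega)
        refine ⟨?_, ?_⟩
        · simp only [List.map_cons, List.nodup_cons]
          refine ⟨fun hmem => ?_, hnd⟩
          obtain ⟨x, hx, hxe⟩ := List.mem_map.1 hmem
          exact (hnm x hx) (by simp [hxe])
        · intro x hx
          rcases List.mem_cons.1 hx with h | h
          · subst h; exact hsno
          · exact fun hc => (hnm x h) (by simp [hc])

lemma runPark_backward (n : ℕ) : ∀ (l : List (ℕ × Bool)) (occ : Finset ℕ),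
    (∀ x ∈ l, x.2 = false) → (∀ x ∈ l, x.1 ∈ Finset.Icc 1 n) →
    occ ⊆ Finset.Icc 1 n → runPark (dirStep n) l occ = true →
    ∃ F : Finset ℕ, F ⊆ Finset.Icc 1 n ∧
      F.card = occ.card + l.length ∧
      F.sum id ≤ occ.sum id + (l.map Prod.fst).sum
  | [], occ, _, _, hsub, _ => ⟨occ, hsub, by simp, by simp⟩
  | (a, b) :: rest, occ, hb, hI, hsub, hrun => by
    obtain rfl : b = false := hb (a, b) (by simp)
    rw [runPark] at hrun
    cases hstep : dirStep n occ a false with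
    | none => rw [hstep] at hrun; simp at hrun
    | some s =>
      rw [hstep] at hrun
      obtain ⟨hsno, hsI, -, hle⟩ := dirStep_some (hI (a, false) (by simp)) hstep
      have has := hle rfl
      obtain ⟨F, hFI, hcard, hsum⟩ := runPark_backward n rest
        (insert s occ) (fun x hx => hb x (by simp [hx]))
        (fun x hx => hI x (by simp [hx])) (Finset.insert_subset hsI hsub) hrun
      have hins : (insert s occ).sum id = s + occ.sum id :=
        Finset.sum_insert hsno
      refine ⟨F, hFI, ?_, ?_⟩
      · rw [hcard, Finset.card_insert_of_notMem hsno]; simp; omega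
      · simp only [List.map_cons, List.sum_cons]
        rw [hins] at hsum; omega

end Aux

section Aux2

lemma prefs_mem_Icc (n : ℕ) (α : Fin n → Fin n) (i : Fin n) :
    (α i).1 + 1 ∈ Finset.Icc 1 n :=
  Finset.mem_Icc.2 ⟨Nat.le_add_left 1 _, (α i).2⟩

lemma parksDir_of_bijective {n : ℕ} (α : Fin n → Fin n)
    (hbij : Function.Bijective α) (b : Fin n → Bool) :
    parksDir n (fun i => (α i).1 + 1) b = true := by
  rw [parksDir]
  apply runPark_nodup
  · rw [show (List.ofFn (fun i => ((α i).1 + 1, b i))).map Prod.fst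
        = List.ofFn (fun i => (α i).1 + 1) by simp [List.map_ofFn, Function.comp]; rfl]
    rw [List.nodup_ofFn]
    intro i j hij
    have h2 : (α i : ℕ) = (α j : ℕ) := by simpa using hij
    exact hbij.1 (Fin.val_injective h2)
  · intro x hx
    simp

lemma bijective_of_parks {n : ℕ} (α : Fin n → Fin n)
    (hT : parksDir n (fun i => (α i).1 + 1) (fun _ => true) = true)
    (hF : parksDir n (fun i => (α i).1 + 1) (fun _ => false) = true) :
    Function.Bijective α := by
  rw [parksDir] at hT hF
  have hmapT : (List.ofFn (fun i : Fin n => ((α i).1 + 1, true))).map Prod.fst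
      = List.ofFn (fun i : Fin n => (α i).1 + 1) := by
    simp [List.map_ofFn, Function.comp]
    rfl
  have hmapF : (List.ofFn (fun i : Fin n => ((α i).1 + 1, false))).map Prod.fst
      = List.ofFn (fun i : Fin n => (α i).1 + 1) := by
    simp [List.map_ofFn, Function.comp]
    rfl
  obtain ⟨F1, -, hF1I, hF1card, hF1sum, hF1eq⟩ := runPark_forward n _ ∅
    (by intro x hx; simp only [List.mem_ofFn] at hx; obtain ⟨i, rfl⟩ := hx; rfl)
    (by intro x hx; simp only [List.mem_ofFn] at hx; obtain ⟨i, rfl⟩ := hx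
        exact prefs_mem_Icc n α i)
    (Finset.empty_subset _) hT
  obtain ⟨F2, hF2I, hF2card, hF2sum⟩ := runPark_backward n _ ∅
    (by intro x hx; simp only [List.mem_ofFn] at hx; obtain ⟨i, rfl⟩ := hx; rfl)
    (by intro x hx; simp only [List.mem_ofFn] at hx; obtain ⟨i, rfl⟩ := hx
        exact prefs_mem_Icc n α i)
    (Finset.empty_subset _) hF
  have hIcard : (Finset.Icc 1 n).card = n := by rw [Nat.card_Icc]; omega
  have hF1' : F1 = Finset.Icc 1 n := by
    apply Finset.eq_of_subset_of_card_le hF1I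
    rw [hIcard, hF1card]; simp
  have hF2' : F2 = Finset.Icc 1 n := by
    apply Finset.eq_of_subset_of_card_le hF2I
    rw [hIcard, hF2card]; simp
  rw [hmapT] at hF1sum hF1eq
  rw [hmapF] at hF2sum
  rw [hF1'] at hF1sum hF1eq
  rw [hF2'] at hF2sum
  simp only [Finset.sum_empty, Finset.card_empty, zero_add] at hF1sum hF1eq hF2sum
  obtain ⟨hnd, -⟩ := hF1eq (le_antisymm hF2sum hF1sum)
  rw [List.nodup_ofFn] at hnd
  have hinj : Function.Injective α := fun i j hij => hnd (by simp [hij])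
  exact (Finite.injective_iff_bijective).1 hinj

end Aux2

section Aux3

lemma exists_parks {n : ℕ} (α : Fin n → Fin n) :
    ∃ b : Fin n → Bool, parksDir n (fun i => (α i).1 + 1) b = true := by
  obtain ⟨bs, hbl, hrun⟩ := exists_coins n (List.ofFn (fun i => (α i).1 + 1)) ∅
    (Finset.empty_subset _)
    (by intro x hx; simp only [List.mem_ofFn] at hx; obtain ⟨i, rfl⟩ := hx
        exact prefs_mem_Icc n α i)
    (by simp)
  rw [List.length_ofFn] at hbl
  refine ⟨fun i => bs[i.1]'(by omega), ?_⟩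
  rw [parksDir]
  have heq : List.ofFn (fun i : Fin n => ((α i).1 + 1, bs[i.1]'(by omega)))
      = (List.ofFn (fun i : Fin n => (α i).1 + 1)).zip bs := by
    apply List.ext_getElem
    · simp [hbl]
    · intro m h1 h2
      simp only [List.length_ofFn] at h1
      simp [List.getElem_ofFn, List.getElem_zip]
  rw [heq]
  exact hrun

lemma weight_pos {n : ℕ} {p : ℝ} (hp0 : 0 < p) (hp1 : p < 1) (b : Fin n → Bool) :
    0 < ∏ i, if b i then p else 1 - p := by
  apply Finset.prod_pos
  intro i _
  by_cases h : b i <;> simp [h] <;> linarith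

lemma weight_sum {n : ℕ} (p : ℝ) :
    ∑ b : Fin n → Bool, (∏ i, if b i then p else 1 - p) = 1 := by
  have := Finset.prod_univ_sum (fun _ : Fin n => (Finset.univ : Finset Bool))
    (fun _ t => if t then p else 1 - p)
  rw [Fintype.piFinset_univ] at this
  rw [← this]
  simp

end Aux3


/-- In the random-direction model with `p ∈ (0,1)`, a permutation parks with probability 1,
and any non-permutation parks with probability strictly between 0 and 1. -/
theorem stmt1 (n : ℕ) (hn : 0 < n) (p : ℝ) (hp0 : 0 < p) (hp1 : p < 1)
    (α : Fin n → Fin n) :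
    (Function.Bijective α → probDir n p (fun i => (α i).1 + 1) = 1) ∧
    (¬ Function.Bijective α →
      0 < probDir n p (fun i => (α i).1 + 1) ∧ probDir n p (fun i => (α i).1 + 1) < 1) := by
  constructor
  · intro hbij
    rw [probDir]
    rw [show (∑ b : Fin n → Bool, (∏ i, if b i then p else 1 - p) *
        (if parksDir n (fun i => (α i).1 + 1) b then 1 else 0))
        = ∑ b : Fin n → Bool, (∏ i, if b i then p else 1 - p) from
      Finset.sum_congr rfl (fun b _ => by
        rw [parksDir_of_bijective α hbij b]; simp)]
    exact weight_sum p
  · intro hnb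
    constructor
    · rw [probDir]
      obtain ⟨b0, hb0⟩ := exists_parks α
      apply Finset.sum_pos'
      · intro b _
        by_cases h : parksDir n (fun i => (α i).1 + 1) b <;>
          simp [h, le_of_lt (weight_pos hp0 hp1 b)]
      · refine ⟨b0, Finset.mem_univ _, ?_⟩
        rw [hb0]
        simpa using weight_pos hp0 hp1 b0
    · obtain ⟨b1, hb1⟩ : ∃ b1 : Fin n → Bool,
          parksDir n (fun i => (α i).1 + 1) b1 = false := by
        by_contra hc
        push_neg at hc
        simp only [Bool.not_eq_false] at hc
        exact hnb (bijective_of_parks α (hc _) (hc _))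
      rw [probDir]
      calc ∑ b : Fin n → Bool, (∏ i, if b i then p else 1 - p) *
              (if parksDir n (fun i => (α i).1 + 1) b then 1 else 0)
          < ∑ b : Fin n → Bool, (∏ i, if b i then p else 1 - p) := by
            apply Finset.sum_lt_sum
            · intro b _
              by_cases h : parksDir n (fun i => (α i).1 + 1) b <;>
                simp [h, le_of_lt (weight_pos hp0 hp1 b)]
            · refine ⟨b1, Finset.mem_univ _, ?_⟩
              rw [hb1]
              simpa using weight_pos hp0 hp1 b1
        _ = 1 := weight_sum p
end

section
/- Suppose α = (α_1,...,α_n) ∈ {1,...,n}^n parks under the choice sequence β = (β_2,...,β_n) ∈ {0,1}^{n−1} in the deterministic 1-Naples simulation. If β_i = 1 for some i, then α also parks under the sequence obtained from β by replacing β_i with 0. -/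
namespace S4

def D (occ : Finset ℕ) (t : ℕ) : ℕ := (occ.filter (fun x => t ≤ x)).card

lemma D_insert (occ : Finset ℕ) (s t : ℕ) (hs : s ∉ occ) :
    D (insert s occ) t = D occ t + (if t ≤ s then 1 else 0) := by
  unfold D
  rw [Finset.filter_insert]
  split
  · rw [Finset.card_insert_of_notMem (by simp [hs])]
  · simp

lemma D_le_add (occ : Finset ℕ) (t t' : ℕ) (h : t ≤ t') : D occ t ≤ (t' - t) + D occ t' := by
  have hsub : occ.filter (fun x => t ≤ x) ⊆ Finset.Ico t t' ∪ occ.filter (fun x => t' ≤ x) := by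
    intro x hx
    simp only [Finset.mem_filter] at hx
    simp only [Finset.mem_union, Finset.mem_Ico, Finset.mem_filter]
    by_cases hlt : x < t'
    · exact Or.inl ⟨hx.2, hlt⟩
    · exact Or.inr ⟨hx.1, by omega⟩
  calc D occ t ≤ (Finset.Ico t t' ∪ occ.filter (fun x => t' ≤ x)).card := Finset.card_le_card hsub

    _ ≤ (Finset.Ico t t').card + D occ t' := Finset.card_union_le _ _
    _ = (t' - t) + D occ t' := by rw [Nat.card_Ico]

lemma D_ge_of_subset (occ : Finset ℕ) (t t' : ℕ) (htt : t ≤ t')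
    (h : ∀ u, t ≤ u → u < t' → u ∈ occ) : (t' - t) + D occ t' ≤ D occ t := by
  have hsub : Finset.Ico t t' ∪ occ.filter (fun x => t' ≤ x) ⊆ occ.filter (fun x => t ≤ x) := by
    intro x hx
    simp only [Finset.mem_union, Finset.mem_Ico, Finset.mem_filter] at hx
    simp only [Finset.mem_filter]
    rcases hx with h1 | h2
    · exact ⟨h x h1.1 h1.2, h1.1⟩
    · exact ⟨h2.1, by omega⟩
  have hdisj : Disjoint (Finset.Ico t t') (occ.filter (fun x => t' ≤ x)) := by
    rw [Finset.disjoint_left]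
    intro x hx hx'
    simp only [Finset.mem_Ico] at hx
    simp only [Finset.mem_filter] at hx'
    omega
  calc (t' - t) + D occ t' = (Finset.Ico t t' ∪ occ.filter (fun x => t' ≤ x)).card := by
        rw [Finset.card_union_of_disjoint hdisj, Nat.card_Ico]
        rfl
    _ ≤ D occ t := Finset.card_le_card hsub

lemma D_succ_mem (occ : Finset ℕ) (s : ℕ) (h : s ∈ occ) : D occ s = D occ (s+1) + 1 := by
  have h0 : ∀ u, s ≤ u → u < s + 1 → u ∈ occ := by
    intro u h1 h2
    have hu : u = s := by omega
    rw [hu]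
    exact h
  have h1 := D_ge_of_subset occ s (s+1) (by omega) h0
  have h2 := D_le_add occ s (s+1) (by omega)
  omega

lemma D_succ_not_mem (occ : Finset ℕ) (s : ℕ) (h : s ∉ occ) : D occ s = D occ (s+1) := by
  unfold D
  congr 1
  ext x
  simp only [Finset.mem_filter]
  constructor
  · rintro ⟨hx, hle⟩
    refine ⟨hx, ?_⟩
    rcases Nat.eq_or_lt_of_le hle with rfl | hlt
    · exact absurd hx h
    · omega
  · rintro ⟨hx, hle⟩; exact ⟨hx, by omega⟩

lemma D_full (occ : Finset ℕ) (n t : ℕ) (hb : ∀ x ∈ occ, x ≤ n) (h : n + 1 - t ≤ D occ t) :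
    ∀ u, t ≤ u → u ≤ n → u ∈ occ := by
  have hsub : occ.filter (fun x => t ≤ x) ⊆ Finset.Icc t n := by
    intro x hx
    simp only [Finset.mem_filter] at hx
    simp only [Finset.mem_Icc]
    exact ⟨hx.2, hb x hx.1⟩
  have heq := Finset.eq_of_subset_of_card_le hsub (by rw [Nat.card_Icc]; exact h)
  intro u h1 h2
  have : u ∈ occ.filter (fun x => t ≤ x) := heq ▸ Finset.mem_Icc.2 ⟨h1, h2⟩
  exact (Finset.mem_filter.1 this).1

def Inv (n : ℕ) (o₁ o₂ : Finset ℕ) : Prop :=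
  o₁.card = o₂.card ∧ (∀ t, D o₂ t ≤ D o₁ t) ∧ (∀ x ∈ o₁, x ≤ n) ∧ (∀ x ∈ o₂, x ≤ n)

lemma Inv.refl {n : ℕ} {occ : Finset ℕ} (hb : ∀ x ∈ occ, x ≤ n) : Inv n occ occ :=
  ⟨rfl, fun _ => le_refl _, hb, hb⟩

lemma Inv.insert {n : ℕ} {o₁ o₂ : Finset ℕ} (h : Inv n o₁ o₂) {s₁ s₂ : ℕ}
    (hs₁ : s₁ ∉ o₁) (hs₂ : s₂ ∉ o₂) (hn₁ : s₁ ≤ n) (hn₂ : s₂ ≤ n)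
    (hc : s₂ ≤ s₁ ∨ ∀ t, s₁ < t → t ≤ s₂ → D o₂ t < D o₁ t) :
    Inv n (insert s₁ o₁) (insert s₂ o₂) := by
  obtain ⟨hcard, hD, hb₁, hb₂⟩ := h
  refine ⟨?_, ?_, ?_, ?_⟩
  · rw [Finset.card_insert_of_notMem hs₁, Finset.card_insert_of_notMem hs₂, hcard]
  · intro t
    rw [D_insert _ _ _ hs₁, D_insert _ _ _ hs₂]
    have hDt := hD t
    rcases hc with hc | hc
    · split_ifs <;> omega
    · by_cases h1 : t ≤ s₂
      · by_cases h2 : t ≤ s₁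
        · simp only [h1, h2, if_true]; omega
        · have := hc t (by omega) h1
          simp only [h1, h2, if_true, if_false]; omega
      · split_ifs <;> omega
  · intro x hx
    rcases Finset.mem_insert.1 hx with rfl | hx
    · exact hn₁
    · exact hb₁ x hx
  · intro x hx
    rcases Finset.mem_insert.1 hx with rfl | hx
    · exact hn₂
    · exact hb₂ x hx

lemma forwardStrict {n : ℕ} {o₁ o₂ : Finset ℕ} (h : Inv n o₁ o₂) {s₁ s₂ : ℕ}
    (hs₁ : s₁ ∉ o₁) (hsub : ∀ u, s₁ ≤ u → u < s₂ → u ∈ o₂) :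
    ∀ t, s₁ < t → t ≤ s₂ → D o₂ t < D o₁ t := by
  intro t h1 h2
  have hA : (t - s₁) + D o₂ t ≤ D o₂ s₁ :=
    D_ge_of_subset o₂ s₁ t (by omega) (fun u hu1 hu2 => hsub u hu1 (by omega))
  have hB : D o₁ s₁ = D o₁ (s₁+1) := D_succ_not_mem o₁ s₁ hs₁
  have hC : D o₁ (s₁+1) ≤ (t - (s₁+1)) + D o₁ t := D_le_add o₁ (s₁+1) t (by omega)
  have hD := h.2.1 s₁
  omega

lemma firstFree_cons (occ : Finset ℕ) (x : ℕ) (l : List ℕ) :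
    firstFree occ (x::l) = if x ∉ occ then some x else firstFree occ l := by
  by_cases hx : x ∈ occ <;> simp [firstFree, List.find?_cons, hx]

lemma firstFree_range'_some (occ : Finset ℕ) (s m t : ℕ) :
    firstFree occ (List.range' s m) = some t ↔
      s ≤ t ∧ t < s + m ∧ t ∉ occ ∧ ∀ u, s ≤ u → u < t → u ∈ occ := by
  induction m generalizing s with
  | zero =>
    simp only [List.range'_zero, firstFree, List.find?_nil]
    constructor
    · intro h; cases h
    · rintro ⟨h1, h2, -⟩; omega
  | succ m ih =>
    rw [show List.range' s (m+1) = s :: List.range' (s+1) m from List.range'_succ,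
      firstFree_cons]
    by_cases hs : s ∈ occ
    · rw [if_neg (by simpa using hs), ih (s+1)]
      constructor
      · rintro ⟨h1, h2, h3, h4⟩
        refine ⟨by omega, by omega, h3, ?_⟩
        intro u hu1 hu2
        rcases Nat.eq_or_lt_of_le hu1 with rfl | hlt
        · exact hs
        · exact h4 u (by omega) hu2
      · rintro ⟨h1, h2, h3, h4⟩
        have hst : s ≠ t := fun he => h3 (he ▸ hs)
        exact ⟨by omega, by omega, h3, fun u hu1 hu2 => h4 u (by omega) hu2⟩
    · rw [if_pos (by simpa using hs)]
      constructor
      · rintro h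
        injection h with h
        subst h
        exact ⟨le_refl _, by omega, hs, fun u h1 h2 => by omega⟩
      · rintro ⟨h1, h2, h3, h4⟩
        have : t = s := by
          by_contra hne
          exact hs (h4 s (le_refl _) (by omega))
        rw [this]
  
lemma firstFree_range'_none (occ : Finset ℕ) (s m : ℕ) :
    firstFree occ (List.range' s m) = none ↔ ∀ u, s ≤ u → u < s + m → u ∈ occ := by
  rw [firstFree, List.find?_eq_none]
  constructor
  · intro h u h1 h2
    have := h u (by rw [List.mem_range'_1]; omega)
    simpa using this
  · intro h u hu
    rw [List.mem_range'_1] at hu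
    simpa using h u hu.1 (by omega)

lemma naplesStep1_eq (n : ℕ) (occ : Finset ℕ) (a : ℕ) (b : Bool) :
    naplesStep n 1 occ a b =
      if a ∉ occ then some a
      else if b = true ∧ 2 ≤ a ∧ a - 1 ∉ occ then some (a - 1)
      else firstFree occ (List.range' (a + 1) (n - a)) := by
  by_cases ha : a ∈ occ
  · by_cases hb : b = true
    · subst hb
      by_cases h2 : 2 ≤ a
      · have hmax : max (a - 1) 1 = a - 1 := by omega
        have hmin : min 1 (a - 1) = 1 := by omega
        by_cases hm : a - 1 ∈ occ
        · simp [naplesStep, ha, hmax, hmin, List.range'_one, firstFree_cons, hm, firstFree]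
        · simp [naplesStep, ha, hmax, hmin, List.range'_one, firstFree_cons, hm, h2]
      · have hmin : min 1 (a - 1) = 0 := by omega
        simp only [naplesStep, hmin]
        simp [ha, firstFree, show ¬ (2 ≤ a) from h2]
    · have hb' : b = false := by simpa using hb
      subst hb'
      simp [naplesStep, ha]
  · simp [naplesStep, ha]

lemma stepSpec {n : ℕ} {occ : Finset ℕ} {a : ℕ} {b : Bool} {s : ℕ}
    (ha2 : a ≤ n)
    (h : naplesStep n 1 occ a b = some s) :
    s ∉ occ ∧ s ≤ n ∧ (a ≤ s ∨ (s = a - 1 ∧ b = true ∧ 2 ≤ a ∧ a ∈ occ)) := by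
  rw [naplesStep1_eq] at h
  by_cases h1 : a ∈ occ
  · rw [if_neg (by simpa using h1)] at h
    by_cases h2 : b = true ∧ 2 ≤ a ∧ a - 1 ∉ occ
    · rw [if_pos h2] at h
      injection h with h
      subst h
      exact ⟨h2.2.2, by omega, Or.inr ⟨rfl, h2.1, h2.2.1, h1⟩⟩
    · rw [if_neg h2, firstFree_range'_some] at h
      exact ⟨h.2.2.1, by omega, Or.inl (by omega)⟩
  · rw [if_pos h1] at h
    injection h with h
    subst h
    exact ⟨h1, ha2, Or.inl (le_refl _)⟩

lemma stepDom {n : ℕ} {o₁ o₂ : Finset ℕ} (h : Inv n o₁ o₂) {a : ℕ}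
    (ha1 : 1 ≤ a) (ha2 : a ≤ n) (b : Bool) {s₁ : ℕ}
    (h₁ : naplesStep n 1 o₁ a b = some s₁) :
    ∃ s₂, naplesStep n 1 o₂ a b = some s₂ ∧ Inv n (insert s₁ o₁) (insert s₂ o₂) := by
  obtain ⟨hns₁, hsn₁, hcase₁⟩ := stepSpec ha2 h₁
  have has₁ : a - 1 ≤ s₁ := by rcases hcase₁ with h' | h' <;> omega
  by_cases hA2 : a ∈ o₂
  · rw [naplesStep1_eq, if_neg (by simpa using hA2)]
    by_cases hback₂ : b = true ∧ 2 ≤ a ∧ a - 1 ∉ o₂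
    · rw [if_pos hback₂]
      exact ⟨a - 1, rfl, h.insert hns₁ hback₂.2.2 hsn₁ (by omega) (Or.inl has₁)⟩
    · rw [if_neg hback₂]
      cases hf : firstFree o₂ (List.range' (a + 1) (n - a)) with
      | none =>
        exfalso
        rw [firstFree_range'_none] at hf
        -- everything in [a, n] is in o₂
        have hfull₂ : ∀ u, a ≤ u → u ≤ n → u ∈ o₂ := by
          intro u h1 h2
          rcases Nat.eq_or_lt_of_le h1 with rfl | hlt
          · exact hA2
          · exact hf u (by omega) (by omega)
        have hD2 : n + 1 - a ≤ D o₂ a := by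
          have := D_ge_of_subset o₂ a (n+1) (by omega) (fun u h1 h2 => hfull₂ u h1 (by omega))
          omega
        have hfull₁ : ∀ u, a ≤ u → u ≤ n → u ∈ o₁ :=
          D_full o₁ n a h.2.2.1 (le_trans hD2 (h.2.1 a))
        -- so a ∈ o₁, forward fails in o₁; s₁ must be a-1 via back
        rcases hcase₁ with hge | ⟨hs₁e, hbt, h2a, _⟩
        · exact hns₁ (hfull₁ _ hge hsn₁)
        · -- s₁ = a - 1, b true, 2 ≤ a; then hback₂ fails gives a-1 ∈ o₂
          have ha12 : a - 1 ∈ o₂ := by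
            by_contra hc
            exact hback₂ ⟨hbt, h2a, hc⟩
          have hfull₂' : ∀ u, a - 1 ≤ u → u ≤ n → u ∈ o₂ := by
            intro u h1 h2
            rcases Nat.eq_or_lt_of_le h1 with rfl | hlt
            · exact ha12
            · exact hfull₂ u (by omega) h2
          have hD2' : n + 1 - (a-1) ≤ D o₂ (a-1) := by
            have := D_ge_of_subset o₂ (a-1) (n+1) (by omega) (fun u h1 h2 => hfull₂' u h1 (by omega))
            omega
          have := D_full o₁ n (a-1) h.2.2.1 (le_trans hD2' (h.2.1 (a-1)))
          exact hns₁ (hs₁e ▸ this (a-1) (le_refl _) (by omega))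
      | some s₂ =>
        rw [firstFree_range'_some] at hf
        obtain ⟨hf1, hf2, hf3, hf4⟩ := hf
        refine ⟨s₂, rfl, ?_⟩
        by_cases hle : s₂ ≤ s₁
        · exact h.insert hns₁ hf3 hsn₁ (by omega) (Or.inl hle)
        · -- s₁ < s₂ : strictness via [s₁, s₂) ⊆ o₂
          have hsub : ∀ u, s₁ ≤ u → u < s₂ → u ∈ o₂ := by
            intro u h1 h2
            by_cases hu1 : a + 1 ≤ u
            · exact hf4 u hu1 h2
            · by_cases hu2 : u = a
              · rw [hu2]; exact hA2
              · -- u < a, so u = a - 1 and s₁ = a - 1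
                have hu3 : u = a - 1 := by omega
                rcases hcase₁ with hge | ⟨hs₁e, hbt, h2a, _⟩
                · omega
                · have : a - 1 ∈ o₂ := by
                    by_contra hc
                    exact hback₂ ⟨hbt, h2a, hc⟩
                  rw [hu3]; exact this
          exact h.insert hns₁ hf3 hsn₁ (by omega)
            (Or.inr (forwardStrict h hns₁ hsub))
  · rw [naplesStep1_eq, if_pos hA2]
    refine ⟨a, rfl, ?_⟩
    by_cases hle : a ≤ s₁
    · exact h.insert hns₁ hA2 hsn₁ ha2 (Or.inl hle)
    · -- s₁ = a - 1, a ∈ o₁, a ∉ o₂ : strict at t = a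
      rcases hcase₁ with hge | ⟨hs₁e, hbt, h2a, hao₁⟩
      · omega
      · refine h.insert hns₁ hA2 hsn₁ ha2 (Or.inr ?_)
        intro t ht1 ht2
        have hte : t = a := by omega
        subst hte
        have e1 := D_succ_mem o₁ t hao₁
        have e2 := D_succ_not_mem o₂ t hA2
        have e3 := h.2.1 (t+1)
        omega

lemma runDom (n : ℕ) : ∀ (l : List (ℕ × Bool)) (o₁ o₂ : Finset ℕ), Inv n o₁ o₂ →
    (∀ p ∈ l, 1 ≤ p.1 ∧ p.1 ≤ n) →
    runPark (naplesStep n 1) l o₁ = true → runPark (naplesStep n 1) l o₂ = true := by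
  intro l
  induction l with
  | nil => intro o₁ o₂ _ _ _; rfl
  | cons c rest ih =>
    obtain ⟨a, b⟩ := c
    intro o₁ o₂ h hb hrun
    rw [runPark] at hrun ⊢
    cases h₁ : naplesStep n 1 o₁ a b with
    | none => rw [h₁] at hrun; simp at hrun
    | some s₁ =>
      rw [h₁] at hrun
      have hab := hb (a, b) List.mem_cons_self
      obtain ⟨s₂, h₂, hinv⟩ := stepDom h hab.1 hab.2 b h₁
      rw [h₂]
      exact ih _ _ hinv (fun p hp => hb p (List.mem_cons_of_mem _ hp)) hrun

lemma flip (n : ℕ) (a : ℕ) (ha : 1 ≤ a ∧ a ≤ n) :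
    ∀ (pre : List (ℕ × Bool)), ∀ (post : List (ℕ × Bool)) (occ : Finset ℕ),
    (∀ p ∈ pre, 1 ≤ p.1 ∧ p.1 ≤ n) → (∀ p ∈ post, 1 ≤ p.1 ∧ p.1 ≤ n) →
    (∀ x ∈ occ, x ≤ n) →
    runPark (naplesStep n 1) (pre ++ (a, false) :: post) occ = true →
    runPark (naplesStep n 1) (pre ++ (a, true) :: post) occ = true := by
  intro pre
  induction pre with
  | nil =>
    intro post occ _ hpost hocc hrun
    simp only [List.nil_append] at hrun ⊢
    rw [runPark] at hrun ⊢
    by_cases hA : a ∈ occ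
    · rw [naplesStep1_eq, if_neg (by simpa using hA), if_neg (by simp)] at hrun
      rw [naplesStep1_eq, if_neg (by simpa using hA)]
      cases hf : firstFree occ (List.range' (a + 1) (n - a)) with
      | none => rw [hf] at hrun; simp at hrun
      | some s₁ =>
        rw [hf] at hrun
        have hs := (firstFree_range'_some occ _ _ _).1 hf
        by_cases hb2 : 2 ≤ a ∧ a - 1 ∉ occ
        · rw [if_pos ⟨rfl, hb2.1, hb2.2⟩]
          refine runDom n post _ _ ?_ hpost hrun
          refine (Inv.refl hocc).insert hs.2.2.1 hb2.2 (by omega) (by omega) (Or.inl (by omega))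
        · rw [if_neg (by simp only [true_and]; exact hb2)]
          exact hrun
    · rw [naplesStep1_eq, if_pos hA] at hrun
      rw [naplesStep1_eq, if_pos hA]
      exact hrun
  | cons c pre ih =>
    obtain ⟨p, b⟩ := c
    intro post occ hpre hpost hocc hrun
    rw [List.cons_append, runPark] at hrun ⊢
    cases h₁ : naplesStep n 1 occ p b with
    | none => rw [h₁] at hrun; simp at hrun
    | some s =>
      rw [h₁] at hrun
      have hpb := hpre (p, b) List.mem_cons_self
      have hspec := stepSpec hpb.2 h₁
      refine ih post (insert s occ) (fun q hq => hpre q (List.mem_cons_of_mem _ hq)) hpost ?_ hrun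
      intro x hx
      rcases Finset.mem_insert.1 hx with rfl | hx
      · exact hspec.2.1
      · exact hocc x hx

lemma ofFnFlip (n : ℕ) (f : Fin n → ℕ) (hf : ∀ k, 1 ≤ f k ∧ f k ≤ n)
    (b₁ b₂ : Fin n → Bool) (j : Fin n) (hagree : ∀ k, k ≠ j → b₁ k = b₂ k)
    (h1 : b₁ j = false) (h2 : b₂ j = true)
    (hrun : runPark (naplesStep n 1) (List.ofFn (fun k => (f k, b₁ k))) ∅ = true) :
    runPark (naplesStep n 1) (List.ofFn (fun k => (f k, b₂ k))) ∅ = true := by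
  set l₁ := List.ofFn (fun k => (f k, b₁ k)) with hl₁
  set l₂ := List.ofFn (fun k => (f k, b₂ k)) with hl₂
  have hlen₁ : l₁.length = n := by simp [hl₁]
  have hlen₂ : l₂.length = n := by simp [hl₂]
  have hd₁ : l₁ = l₁.take j.1 ++ (f j, false) :: l₁.drop (j.1 + 1) := by
    conv_lhs => rw [← List.take_append_drop j.1 l₁]
    congr 1
    rw [List.drop_eq_getElem_cons (by omega)]
    congr 1
    simp [hl₁, h1]
  have hd₂ : l₂ = l₂.take j.1 ++ (f j, true) :: l₂.drop (j.1 + 1) := by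
    conv_lhs => rw [← List.take_append_drop j.1 l₂]
    congr 1
    rw [List.drop_eq_getElem_cons (by omega)]
    congr 1
    simp [hl₂, h2]
  have htake : l₁.take j.1 = l₂.take j.1 := by
    apply List.ext_getElem (by simp [hlen₁, hlen₂])
    intro m hm1 hm2
    rw [List.getElem_take, List.getElem_take]
    simp only [hl₁, hl₂, List.getElem_ofFn]
    have hmj : m < j.1 := by
      simp [hlen₁] at hm1
      omega
    have hne : (⟨m, by omega⟩ : Fin n) ≠ j := by
      intro he
      have : m = j.1 := congrArg Fin.val he
      omega
    rw [hagree _ hne]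
  have hdrop : l₁.drop (j.1 + 1) = l₂.drop (j.1 + 1) := by
    apply List.ext_getElem (by simp [hlen₁, hlen₂])
    intro m hm1 hm2
    rw [List.getElem_drop, List.getElem_drop]
    simp only [hl₁, hl₂, List.getElem_ofFn]
    have hne : (⟨j.1 + 1 + m, by simp [hlen₁] at hm1; omega⟩ : Fin n) ≠ j := by
      intro he
      have : j.1 + 1 + m = j.1 := congrArg Fin.val he
      omega
    rw [hagree _ hne]
  have hbound : ∀ p ∈ l₂, 1 ≤ p.1 ∧ p.1 ≤ n := by
    intro p hp
    rw [hl₂, List.mem_ofFn] at hp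
    obtain ⟨k, hk⟩ := hp
    rw [← hk]
    exact hf k
  have hrun' : runPark (naplesStep n 1) (l₂.take j.1 ++ (f j, false) :: l₂.drop (j.1 + 1)) ∅ = true := by
    rw [← htake, ← hdrop, ← hd₁]
    exact hrun
  rw [hd₂]
  exact flip n (f j) (hf j) (l₂.take j.1) (l₂.drop (j.1 + 1)) ∅
    (fun p hp => hbound p (List.take_subset _ _ hp))
    (fun p hp => hbound p (List.drop_subset _ _ hp))
    (by simp) hrun'

end S4

/-- If `α` parks under `β` and `β i = 1`, then `α` also parks after replacing `β i` by `0`. -/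
theorem stmt4 (n : ℕ) (α : Fin n → Fin n) (β : Fin (n - 1) → Bool)
    (h : parksUnder n (fun i => (α i).1 + 1) β = true)
    (i : Fin (n - 1)) (hi : β i = true) :
    parksUnder n (fun i => (α i).1 + 1) (Function.update β i false) = true := by
  have hn : i.1 < n - 1 := i.2
  unfold parksUnder parksNaples at h ⊢
  set b₁ : Fin n → Bool :=
    fun k => if h : 0 < k.1 then !(β ⟨k.1 - 1, by have := k.2; omega⟩) else false with hb₁
  set b₂ : Fin n → Bool :=
    fun k => if h : 0 < k.1 then !(Function.update β i false ⟨k.1 - 1, by have := k.2; omega⟩)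
      else false with hb₂
  have hf : ∀ k : Fin n, 1 ≤ (α k).1 + 1 ∧ (α k).1 + 1 ≤ n := by
    intro k
    have := (α k).2
    omega
  set j : Fin n := ⟨i.1 + 1, by omega⟩ with hj
  have hagree : ∀ k, k ≠ j → b₁ k = b₂ k := by
    intro k hk
    rw [hb₁, hb₂]
    by_cases h0 : 0 < k.1
    · simp only [h0, dif_pos]
      congr 1
      rw [Function.update_of_ne]
      intro he
      apply hk
      have : k.1 - 1 = i.1 := congrArg Fin.val he
      apply Fin.ext
      simp [hj]
      omega
    · simp only [h0, dif_neg]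
      simp
  have h1 : b₁ j = false := by
    rw [hb₁]
    have h0 : 0 < j.1 := by simp [hj]
    simp only [h0, dif_pos]
    have : (⟨j.1 - 1, by have := j.2; omega⟩ : Fin (n-1)) = i := by
      apply Fin.ext
      simp [hj]
    rw [this, hi]
    rfl
  have h2 : b₂ j = true := by
    rw [hb₂]
    have h0 : 0 < j.1 := by simp [hj]
    simp only [h0, dif_pos]
    have : (⟨j.1 - 1, by have := j.2; omega⟩ : Fin (n-1)) = i := by
      apply Fin.ext
      simp [hj]
    rw [this, Function.update_self]
    rfl
  exact S4.ofFnFlip n (fun k => (α k).1 + 1) hf b₁ b₂ j hagree h1 h2 h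
end

section
/- For a positive integer n and α ∈ {1,...,n}^n, the probability that α parks in the random 1-Naples model with p = 1/2 equals 1 if and only if α is a parking function. -/
section StmtFiveAux

/-! ### Helper lemmas for `stmt5` -/

@[simp] lemma firstFree_nil (occ : Finset ℕ) : firstFree occ [] = none := rfl

lemma firstFree_cons (occ : Finset ℕ) (a : ℕ) (l : List ℕ) :
    firstFree occ (a :: l) = if a ∈ occ then firstFree occ l else some a := by
  by_cases h : a ∈ occ <;> simp [firstFree, List.find?_cons, h]

lemma firstFree_none {occ : Finset ℕ} {l : List ℕ} (h : firstFree occ l = none) :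
    ∀ s ∈ l, s ∈ occ := by
  intro s hs
  have := List.find?_eq_none.mp h s hs
  simpa using this

lemma firstFree_range'_some {occ : Finset ℕ} :
    ∀ (len s0 s : ℕ), firstFree occ (List.range' s0 len) = some s →
      s0 ≤ s ∧ s < s0 + len ∧ s ∉ occ ∧ ∀ t, s0 ≤ t → t < s → t ∈ occ := by
  intro len
  induction len with
  | zero => intro s0 s h; simp [firstFree] at h
  | succ m ih =>
    intro s0 s h
    rw [List.range'_succ, firstFree_cons] at h
    by_cases hs0 : s0 ∈ occ
    · rw [if_pos hs0] at h
      obtain ⟨h1, h2, h3, h4⟩ := ih (s0 + 1) s h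
      refine ⟨by omega, by omega, h3, fun t ht1 ht2 => ?_⟩
      rcases Nat.eq_or_lt_of_le ht1 with rfl | h'
      · exact hs0
      · exact h4 t h' ht2
    · rw [if_neg hs0] at h
      cases h
      exact ⟨le_rfl, by omega, hs0, fun t ht1 ht2 => absurd ht1 (by omega)⟩

lemma firstFree_range'_exists {occ : Finset ℕ} {s0 len s : ℕ}
    (h1 : s0 ≤ s) (h2 : s < s0 + len) (h3 : s ∉ occ) :
    ∃ t, firstFree occ (List.range' s0 len) = some t := by
  cases hf : firstFree occ (List.range' s0 len) with
  | some t => exact ⟨t, rfl⟩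
  | none =>
    have hm : s ∈ List.range' s0 len := by
      rw [List.mem_range']
      exact ⟨s - s0, by omega, by omega⟩
    exact absurd (firstFree_none hf s hm) h3

/-- Number of occupied spots `≤ j`. -/
def cnt (j : ℕ) (occ : Finset ℕ) : ℕ := (occ.filter (· ≤ j)).card

lemma cnt_insert {occ : Finset ℕ} {s : ℕ} (hs : s ∉ occ) (j : ℕ) :
    cnt j (insert s occ) = cnt j occ + if s ≤ j then 1 else 0 := by
  unfold cnt
  rw [Finset.filter_insert]
  split
  · rw [Finset.card_insert_of_notMem (fun hm => hs (Finset.mem_filter.mp hm).1)]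
  · simp

lemma card_split {occ : Finset ℕ} {a : ℕ} (ha : 1 ≤ a) :
    occ.card = cnt (a - 1) occ + (occ.filter (fun s => a ≤ s)).card := by
  unfold cnt
  have h := Finset.card_filter_add_card_filter_not
    (s := occ) (p := fun s => s ≤ a - 1)
  have he : Finset.filter (fun s => ¬ s ≤ a - 1) occ
      = Finset.filter (fun s => a ≤ s) occ := by
    apply Finset.filter_congr
    intro x _
    omega
  rw [← h, he]

lemma cnt_split {occ : Finset ℕ} {a j : ℕ} (ha : 1 ≤ a) (haj : a - 1 ≤ j) :
    cnt j occ = cnt (a - 1) occ + (occ.filter (fun s => a ≤ s ∧ s ≤ j)).card := by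
  unfold cnt
  have h := Finset.card_filter_add_card_filter_not
    (s := occ.filter (· ≤ j)) (p := fun s => s ≤ a - 1)
  rw [Finset.filter_filter, Finset.filter_filter] at h
  have he1 : Finset.filter (fun s => s ≤ j ∧ s ≤ a - 1) occ
      = Finset.filter (fun s => s ≤ a - 1) occ := by
    apply Finset.filter_congr
    intro x _
    omega
  have he2 : Finset.filter (fun s => s ≤ j ∧ ¬ s ≤ a - 1) occ
      = Finset.filter (fun s => a ≤ s ∧ s ≤ j) occ := by
    apply Finset.filter_congr
    intro x _
    omega
  rw [he1, he2] at h
  omega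

lemma exists_free {n : ℕ} {occ : Finset ℕ} {a : ℕ} (ha1 : 1 ≤ a) (han : a ≤ n)
    (hb : ∀ s ∈ occ, s ≤ n)
    (h : (occ.filter (fun s => a ≤ s)).card < n + 1 - a) :
    ∃ s, a ≤ s ∧ s ≤ n ∧ s ∉ occ := by
  have hsub : occ.filter (fun s => a ≤ s) ⊆ Finset.Icc a n := by
    intro t ht
    rw [Finset.mem_filter] at ht
    exact Finset.mem_Icc.mpr ⟨ht.2, hb t ht.1⟩
  have hcard : (occ.filter (fun s => a ≤ s)).card < (Finset.Icc a n).card := by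
    rw [Nat.card_Icc]
    omega
  obtain ⟨s, hs1, hs2⟩ := Finset.exists_of_ssubset (Finset.ssubset_iff_subset_ne.mpr
    ⟨hsub, fun he => absurd (he ▸ hcard) (lt_irrefl _)⟩)
  rw [Finset.mem_Icc] at hs1
  exact ⟨s, hs1.1, hs1.2, fun hmem => hs2 (Finset.mem_filter.mpr ⟨hmem, hs1.1⟩)⟩

lemma naplesStep_eq (n k : ℕ) (occ : Finset ℕ) (a : ℕ) (b : Bool) :
    naplesStep n k occ a b =
      if a ∉ occ then some a
      else if b then
        match firstFree occ ((List.range' (max (a - k) 1) (min k (a - 1))).reverse) with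
        | some s => some s
        | none => firstFree occ (List.range' (a + 1) (n - a))
      else firstFree occ (List.range' (a + 1) (n - a)) := rfl

lemma naplesStep0_eq (n : ℕ) (occ : Finset ℕ) (a : ℕ) (b : Bool) :
    naplesStep n 0 occ a b =
      if a ∉ occ then some a else firstFree occ (List.range' (a + 1) (n - a)) := by
  have h : (List.range' (max (a - 0) 1) (min 0 (a - 1))).reverse = [] := by simp
  rw [naplesStep_eq, h]
  cases b <;> simp

lemma naplesStep1_false (n : ℕ) (occ : Finset ℕ) (a : ℕ) :
    naplesStep n 1 occ a false = naplesStep n 0 occ a false := by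
  rw [naplesStep_eq, naplesStep0_eq]
  simp

lemma naplesStep0_some {n : ℕ} {occ : Finset ℕ} {a : ℕ} {b : Bool} {s : ℕ} (han : a ≤ n)
    (h : naplesStep n 0 occ a b = some s) :
    a ≤ s ∧ s ≤ n ∧ s ∉ occ ∧ ∀ t, a ≤ t → t < s → t ∈ occ := by
  rw [naplesStep0_eq] at h
  by_cases hm : a ∈ occ
  · rw [if_neg (by simpa using hm)] at h
    obtain ⟨h1, h2, h3, h4⟩ := firstFree_range'_some _ _ _ h
    refine ⟨by omega, by omega, h3, fun t ht1 ht2 => ?_⟩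
    rcases Nat.eq_or_lt_of_le ht1 with rfl | h'
    · exact hm
    · exact h4 t h' ht2
  · rw [if_pos hm] at h
    cases h
    exact ⟨le_rfl, han, hm, fun t ht1 ht2 => absurd ht1 (by omega)⟩

lemma naplesStep1_succeeds {n : ℕ} {occ : Finset ℕ} {a : ℕ} (b : Bool) {s' : ℕ}
    (ha1 : 1 ≤ a) (han : a ≤ n)
    (hf1 : a ≤ s') (hf2 : s' ≤ n) (hf3 : s' ∉ occ) :
    ∃ s, naplesStep n 1 occ a b = some s ∧ s ∉ occ ∧ s ≤ n ∧
      (s = a ∨ (s + 1 = a) ∨ (a < s ∧ ∀ t, a ≤ t → t < s → t ∈ occ)) := by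
  by_cases hm : a ∈ occ
  · -- the forward search succeeds
    have hne : a + 1 ≤ s' := by
      rcases Nat.eq_or_lt_of_le hf1 with rfl | h
      · exact absurd hm hf3
      · omega
    obtain ⟨t, hfwd⟩ := firstFree_range'_exists (s0 := a + 1) (len := n - a)
      hne (by omega) hf3
    obtain ⟨ht1, ht2, ht3, ht4⟩ := firstFree_range'_some _ _ _ hfwd
    have htn : t ≤ n := by omega
    have hfwdcase : ∀ u, a ≤ u → u < t → u ∈ occ := by
      intro u hu1 hu2
      rcases Nat.eq_or_lt_of_le hu1 with rfl | h'
      · exact hm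
      · exact ht4 u h' hu2
    cases b with
    | false =>
      refine ⟨t, ?_, ht3, htn, Or.inr (Or.inr ⟨by omega, hfwdcase⟩)⟩
      rw [naplesStep_eq, if_neg (by simpa using hm)]
      simpa using hfwd
    | true =>
      rcases Nat.lt_or_ge a 2 with ha2 | ha2
      · -- a = 1 : the back list is empty
        have ha : a = 1 := by omega
        refine ⟨t, ?_, ht3, htn, Or.inr (Or.inr ⟨by omega, hfwdcase⟩)⟩
        rw [naplesStep_eq, if_neg (by simpa using hm)]
        subst ha
        simpa using hfwd
      · -- the back list is [a-1]
        have hlist : (List.range' (max (a - 1) 1) (min 1 (a - 1))).reverse = [a - 1] := by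
          have h1 : max (a - 1) 1 = a - 1 := by omega
          have h2 : min 1 (a - 1) = 1 := by omega
          rw [h1, h2]
          rfl
        by_cases hb : (a - 1) ∈ occ
        · refine ⟨t, ?_, ht3, htn, Or.inr (Or.inr ⟨by omega, hfwdcase⟩)⟩
          have hnone : firstFree occ [a - 1] = none := by simp [firstFree, hb]
          rw [naplesStep_eq, if_neg (by simpa using hm), hlist, if_pos rfl, hnone, hfwd]
        · refine ⟨a - 1, ?_, hb, by omega, Or.inr (Or.inl (by omega))⟩
          have hsome : firstFree occ [a - 1] = some (a - 1) := by simp [firstFree, hb]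
          rw [naplesStep_eq, if_neg (by simpa using hm), hlist, if_pos rfl, hsome]
  · refine ⟨a, ?_, hm, han, Or.inl rfl⟩
    rw [naplesStep_eq, if_pos hm]

/-- Main invariant induction: if the forward (0-Naples) process parks all remaining cars
from `occF`, and the 1-Naples occupancy `occN` dominates `occF` below every threshold,
then the 1-Naples process parks all remaining cars. -/
lemma main_ind (n : ℕ) : ∀ (l : List (ℕ × Bool)) (occN occF : Finset ℕ),
    (∀ p ∈ l, 1 ≤ p.1 ∧ p.1 ≤ n) →
    (∀ s ∈ occN, s ≤ n) → (∀ s ∈ occF, s ≤ n) →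
    occN.card = occF.card →
    (∀ j, cnt j occF ≤ cnt j occN) →
    runPark (naplesStep n 0) l occF = true →
    runPark (naplesStep n 1) l occN = true := by
  intro l
  induction l with
  | nil => intro _ _ _ _ _ _ _ _; rfl
  | cons p rest ih =>
    obtain ⟨a, b⟩ := p
    intro occN occF hl hN hF hcard hcnt hrun
    have ha1 : 1 ≤ a := (hl (a, b) (List.mem_cons_self)).1
    have han : a ≤ n := (hl (a, b) (List.mem_cons_self)).2
    cases hF0 : naplesStep n 0 occF a b with
    | none => rw [runPark, hF0] at hrun; exact absurd hrun (by simp)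
    | some sF =>
      rw [runPark, hF0] at hrun
      obtain ⟨hsF1, hsF2, hsF3, hsF4⟩ := naplesStep0_some han hF0
      -- count free spots to find a free spot ≥ a for occN
      have hFlt : (occF.filter (fun s => a ≤ s)).card < n + 1 - a := by
        have hsub : insert sF (occF.filter (fun s => a ≤ s)) ⊆ Finset.Icc a n := by
          intro t ht
          rcases Finset.mem_insert.mp ht with rfl | ht'
          · exact Finset.mem_Icc.mpr ⟨hsF1, hsF2⟩
          · rw [Finset.mem_filter] at ht'
            exact Finset.mem_Icc.mpr ⟨ht'.2, hF t ht'.1⟩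
        have := Finset.card_le_card hsub
        rw [Finset.card_insert_of_notMem
          (fun hm => hsF3 (Finset.mem_filter.mp hm).1), Nat.card_Icc] at this
        omega
      have hNlt : (occN.filter (fun s => a ≤ s)).card < n + 1 - a := by
        have h1 := card_split (occ := occN) ha1
        have h2 := card_split (occ := occF) ha1
        have h3 := hcnt (a - 1)
        omega
      obtain ⟨s', hs'1, hs'2, hs'3⟩ := exists_free ha1 han hN hNlt
      obtain ⟨sN, hstep, hsN3, hsNn, hcase⟩ :=
        naplesStep1_succeeds b ha1 han hs'1 hs'2 hs'3
      rw [runPark, hstep]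
      apply ih (insert sN occN) (insert sF occF)
        (fun q hq => hl q (List.mem_cons_of_mem _ hq))
      · intro s hs
        rcases Finset.mem_insert.mp hs with rfl | hs'
        · exact hsNn
        · exact hN s hs'
      · intro s hs
        rcases Finset.mem_insert.mp hs with rfl | hs'
        · exact hsF2
        · exact hF s hs'
      · rw [Finset.card_insert_of_notMem hsN3, Finset.card_insert_of_notMem hsF3, hcard]
      · intro j
        rw [cnt_insert hsN3, cnt_insert hsF3]
        by_cases hjN : sN ≤ j
        · have := hcnt j
          split_ifs <;> omega
        · by_cases hjF : sF ≤ j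
          · -- hard case: sF ≤ j < sN
            rcases hcase with rfl | heq | ⟨hlt, hall⟩
            · omega
            · omega
            · have haj : a - 1 ≤ j := by omega
              have h1 := cnt_split (occ := occN) (j := j) ha1 haj
              have h2 := cnt_split (occ := occF) (j := j) ha1 haj
              have hNc : (Finset.Icc a j).card ≤
                  (occN.filter (fun s => a ≤ s ∧ s ≤ j)).card := by
                apply Finset.card_le_card
                intro t ht
                rw [Finset.mem_Icc] at ht
                exact Finset.mem_filter.mpr ⟨hall t ht.1 (by omega), ht⟩
              have hFc : (occF.filter (fun s => a ≤ s ∧ s ≤ j)).card ≤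
                  ((Finset.Icc a j).erase sF).card := by
                apply Finset.card_le_card
                intro t ht
                rw [Finset.mem_filter] at ht
                exact Finset.mem_erase.mpr
                  ⟨fun hts => hsF3 (hts ▸ ht.1), Finset.mem_Icc.mpr ht.2⟩
              rw [Finset.card_erase_of_mem (Finset.mem_Icc.mpr ⟨hsF1, hjF⟩)] at hFc
              rw [Nat.card_Icc] at hNc hFc
              have h3 := hcnt (a - 1)
              rw [if_pos hjF, if_neg hjN]
              omega
          · have := hcnt j
            split_ifs <;> omega
      · exact hrun

/-- The `0`-Naples run does not depend on the coins. -/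
lemma run0_coins (n : ℕ) : ∀ (l : List (ℕ × Bool)) (c : Bool) (occ : Finset ℕ),
    runPark (naplesStep n 0) l occ =
      runPark (naplesStep n 0) (l.map (fun p => (p.1, c))) occ := by
  intro l
  induction l with
  | nil => intro c occ; rfl
  | cons p rest ih =>
    obtain ⟨a, b⟩ := p
    intro c occ
    rw [List.map_cons, runPark, runPark]
    have hstep : naplesStep n 0 occ a c = naplesStep n 0 occ a b := by
      rw [naplesStep0_eq, naplesStep0_eq]
    rw [hstep]
    cases naplesStep n 0 occ a b with
    | none => rfl
    | some s => exact ih c _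

/-- With all-false coins, the `1`-Naples run agrees with the `0`-Naples run. -/
lemma run1_false (n : ℕ) : ∀ (l : List (ℕ × Bool)), (∀ p ∈ l, p.2 = false) →
    ∀ (occ : Finset ℕ),
    runPark (naplesStep n 1) l occ = runPark (naplesStep n 0) l occ := by
  intro l
  induction l with
  | nil => intro _ _; rfl
  | cons p rest ih =>
    obtain ⟨a, b⟩ := p
    intro hl occ
    have hb : b = false := hl (a, b) (List.mem_cons_self)
    subst hb
    rw [runPark, runPark, naplesStep1_false]
    cases naplesStep n 0 occ a false with
    | none => rfl
    | some s => exact ih (fun q hq => hl q (List.mem_cons_of_mem _ hq)) _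

end StmtFiveAux

/-- `α` parks with probability 1 in the random 1-Naples model with `p = 1/2` iff `α` is a
parking function. -/
theorem stmt5 (n : ℕ) (hn : 0 < n) (α : Fin n → Fin n) :
    probNaples n 1 (1/2) (fun i => (α i).1 + 1) = 1 ↔
      forwardParks n (fun i => (α i).1 + 1) = true := by
  set α' : Fin n → ℕ := fun i => (α i).1 + 1 with hα'
  -- Step 1: the probability is (1/2)^n times the number of good coin sequences
  have hP : probNaples n 1 (1/2) α' =
      ((1:ℝ)/2)^n * ((Finset.univ.filter
        (fun b : Fin n → Bool => parksNaples n 1 α' b = true)).card : ℝ) := by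
    unfold probNaples
    rw [← Finset.sum_boole, Finset.mul_sum]
    apply Finset.sum_congr rfl
    intro b _
    congr 1
    have : ∀ i : Fin n, (if b i then (1:ℝ)/2 else 1 - 1/2) = 1/2 := by
      intro i
      split <;> norm_num
    rw [Finset.prod_congr rfl (fun i _ => this i), Finset.prod_const,
      Finset.card_univ, Fintype.card_fin]
  -- Step 2: probability = 1 iff every coin sequence parks
  have hcardu : (Finset.univ : Finset (Fin n → Bool)).card = 2 ^ n := by
    rw [Finset.card_univ]
    simp [Fintype.card_fun]
  have hiff1 : probNaples n 1 (1/2) α' = 1 ↔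
      ∀ b : Fin n → Bool, parksNaples n 1 α' b = true := by
    rw [hP]
    constructor
    · intro h b
      have key : (2:ℝ)^n * (((1:ℝ)/2)^n * ((Finset.univ.filter
          (fun b : Fin n → Bool => parksNaples n 1 α' b = true)).card : ℝ)) =
          ((Finset.univ.filter
          (fun b : Fin n → Bool => parksNaples n 1 α' b = true)).card : ℝ) := by
        rw [← mul_assoc, ← mul_pow]
        norm_num
      rw [h, mul_one] at key
      have hcard : (Finset.univ.filter
          (fun b : Fin n → Bool => parksNaples n 1 α' b = true)).card = 2 ^ n := by
        have : ((Finset.univ.filter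
            (fun b : Fin n → Bool => parksNaples n 1 α' b = true)).card : ℝ)
            = ((2 ^ n : ℕ) : ℝ) := by
          rw [← key]
          push_cast
          ring
        exact_mod_cast this
      have huniv : Finset.univ.filter
          (fun b : Fin n → Bool => parksNaples n 1 α' b = true) = Finset.univ := by
        apply Finset.eq_of_subset_of_card_le (Finset.filter_subset _ _)
        rw [hcard, hcardu]
      have hb : b ∈ Finset.univ.filter
          (fun b : Fin n → Bool => parksNaples n 1 α' b = true) := by
        rw [huniv]
        exact Finset.mem_univ b
      exact (Finset.mem_filter.mp hb).2
    · intro h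
      have huniv : Finset.univ.filter
          (fun b : Fin n → Bool => parksNaples n 1 α' b = true) = Finset.univ := by
        apply Finset.filter_true_of_mem
        intro b _
        exact h b
      rw [huniv, hcardu]
      push_cast
      rw [← mul_pow]
      norm_num
  rw [hiff1]
  -- Step 3: all coin sequences park iff the all-forward sequence parks
  constructor
  · intro h
    have h0 := h (fun _ => false)
    unfold parksNaples at h0
    rw [run1_false n _ (by
      intro p hp
      rw [List.mem_ofFn] at hp
      obtain ⟨i, hi⟩ := hp
      rw [← hi])] at h0
    exact h0
  · intro h b
    unfold parksNaples
    apply main_ind n _ ∅ ∅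
    · intro p hp
      rw [List.mem_ofFn] at hp
      obtain ⟨i, hi⟩ := hp
      rw [← hi]
      have := (α i).2
      simp only [hα']
      omega
    · intro s hs
      simp at hs
    · intro s hs
      simp at hs
    · rfl
    · intro j
      exact le_refl _
    · -- the forward run with coins b equals forwardParks
      have := run0_coins n (List.ofFn (fun i => (α' i, b i))) false ∅
      rw [this]
      have hmap : (List.ofFn (fun i => (α' i, b i))).map (fun p => (p.1, false))
          = List.ofFn (fun i => (α' i, false)) := by
        rw [List.map_ofFn]
        rfl
      rw [hmap]
      exact h
end

section
/- For a positive integer n and α ∈ {1,...,n}^n, the probability that α parks in the random 1-Naples model with p = 1/2 is positive if and only if α is a 1-Naples parking function (i.e., α parks when every car always backs up one spot before moving forward). -/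
namespace Stmt6Aux

def cnt (j : ℕ) (S : Finset ℕ) : ℕ := (S.filter (fun x => j ≤ x)).card

lemma cnt_insert {s : ℕ} {S : Finset ℕ} (hs : s ∉ S) (j : ℕ) :
    cnt j (insert s S) = cnt j S + (if j ≤ s then 1 else 0) := by
  unfold cnt
  by_cases hj : j ≤ s
  · rw [if_pos hj, Finset.filter_insert, if_pos hj,
      Finset.card_insert_of_notMem (by simp [hs])]
  · rw [if_neg hj, Finset.filter_insert, if_neg hj, add_zero]

def mid (b j : ℕ) (S : Finset ℕ) : ℕ := (S.filter (fun x => b ≤ x ∧ x < j)).card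

lemma cnt_split {b j : ℕ} (h : b ≤ j) (S : Finset ℕ) :
    cnt b S = cnt j S + mid b j S := by
  unfold cnt mid
  rw [← Finset.card_union_of_disjoint]
  · congr 1
    ext x
    simp only [Finset.mem_filter, Finset.mem_union]
    by_cases hx : x ∈ S <;> simp [hx] <;> omega
  · rw [Finset.disjoint_left]
    intro x hx hx2
    simp only [Finset.mem_filter] at hx hx2
    omega

lemma mid_full {b j : ℕ} {S : Finset ℕ} (h : ∀ x, b ≤ x → x < j → x ∈ S) :
    mid b j S = j - b := by
  unfold mid
  have : S.filter (fun x => b ≤ x ∧ x < j) = Finset.Ico b j := by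
    ext x
    simp only [Finset.mem_filter, Finset.mem_Ico]
    exact ⟨fun h => h.2, fun hh => ⟨h x hh.1 hh.2, hh⟩⟩
  rw [this, Nat.card_Ico]

lemma mid_hole {b j m : ℕ} {S : Finset ℕ} (hm : b ≤ m) (hmj : m < j) (hmS : m ∉ S) :
    mid b j S ≤ j - b - 1 := by
  have hsub : S.filter (fun x => b ≤ x ∧ x < j) ⊆ (Finset.Ico b j).erase m := by
    intro x hx
    simp only [Finset.mem_filter] at hx
    simp only [Finset.mem_erase, Finset.mem_Ico]
    exact ⟨fun he => hmS (he ▸ hx.1), hx.2⟩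
  have := Finset.card_le_card hsub
  rwa [Finset.card_erase_of_mem (by simp [Finset.mem_Ico]; omega), Nat.card_Ico] at this

lemma cnt_lt {b j : ℕ} {A B : Finset ℕ} (hbj : b ≤ j)
    (hinv : cnt b A ≤ cnt b B) (hmid : mid b j B < mid b j A) :
    cnt j A < cnt j B := by
  have hA := cnt_split hbj A
  have hB := cnt_split hbj B
  omega

lemma cnt_zero {n j : ℕ} {S : Finset ℕ} (hS : S ⊆ Finset.Icc 1 n) (hj : n < j) :
    cnt j S = 0 := by
  unfold cnt
  rw [Finset.card_eq_zero, Finset.filter_eq_empty_iff]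
  intro x hx
  have := hS hx
  simp only [Finset.mem_Icc] at this
  omega

/-- basic facts about firstFree -/
lemma firstFree_some {occ : Finset ℕ} {l : List ℕ} {s : ℕ}
    (h : firstFree occ l = some s) : s ∈ l ∧ s ∉ occ := by
  unfold firstFree at h
  refine ⟨List.mem_of_find?_eq_some h, ?_⟩
  have := List.find?_some h
  simpa using this

lemma firstFree_none {occ : Finset ℕ} {l : List ℕ} (h : firstFree occ l = none)
    {x : ℕ} (hx : x ∈ l) : x ∈ occ := by
  unfold firstFree at h
  have := List.find?_eq_none.mp h x hx
  simpa using this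

lemma firstFree_isSome {occ : Finset ℕ} {l : List ℕ} {x : ℕ} (hx : x ∈ l)
    (hxo : x ∉ occ) : ∃ s, firstFree occ l = some s := by
  cases h : firstFree occ l with
  | none => exact absurd (firstFree_none h hx) hxo
  | some s => exact ⟨s, rfl⟩

lemma firstFree_range'_before {occ : Finset ℕ} {s : ℕ} :
    ∀ (len m : ℕ), firstFree occ (List.range' m len) = some s →
      ∀ x, m ≤ x → x < s → x ∈ occ := by
  intro len
  induction len with
  | zero => intro m h; simp [firstFree] at h
  | succ k ih =>
    intro m h x hx1 hx2
    rw [List.range'_succ] at h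
    unfold firstFree at h
    rw [List.find?_cons] at h
    by_cases hm : m ∈ occ
    · simp only [hm, decide_eq_true_eq, not_true_eq_false, decide_false] at h
      rcases Nat.eq_or_lt_of_le hx1 with he | hl
      · exact he ▸ hm
      · exact ih (m + 1) h x hl hx2
    · simp only [hm, not_false_eq_true, decide_true] at h
      have : m = s := by injection h
      omega

lemma mem_range'_iff {m len x : ℕ} : x ∈ List.range' m len ↔ m ≤ x ∧ x < m + len := by
  simp [List.mem_range'_1]

/-- Case analysis on the naples step with k = 1. -/
lemma step_cases {n a : ℕ} {occ : Finset ℕ} {b : Bool} {s : ℕ}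
    (h : naplesStep n 1 occ a b = some s) :
    (a ∉ occ ∧ s = a) ∨
    (a ∈ occ ∧ 2 ≤ a ∧ s = a - 1 ∧ a - 1 ∉ occ) ∨
    (a ∈ occ ∧ firstFree occ (List.range' (a + 1) (n - a)) = some s) := by
  unfold naplesStep at h
  by_cases ha : a ∈ occ
  · simp only [ha, not_true_eq_false, if_false] at h
    by_cases hb : b = true
    · subst hb
      simp only [if_true] at h
      cases hff : firstFree occ ((List.range' (max (a - 1) 1) (min 1 (a - 1))).reverse) with
      | none => rw [hff] at h; exact Or.inr (Or.inr ⟨ha, h⟩)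
      | some t =>
        rw [hff] at h
        simp only [Option.some.injEq] at h
        subst h
        have h2 := firstFree_some hff
        rcases h2 with ⟨hmem, hnocc⟩
        rw [List.mem_reverse, mem_range'_iff] at hmem
        have h2a : 2 ≤ a := by omega
        have : t = a - 1 := by omega
        exact Or.inr (Or.inl ⟨ha, h2a, this, this ▸ hnocc⟩)
    · simp only [Bool.not_eq_true] at hb
      subst hb
      simp only [Bool.false_eq_true, if_false] at h
      exact Or.inr (Or.inr ⟨ha, h⟩)
  · simp only [ha, not_false_eq_true, if_true, Option.some.injEq] at h
    exact Or.inl ⟨ha, h.symm⟩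

lemma naplesStep_free {n a : ℕ} {occ : Finset ℕ} {b : Bool} (h : a ∉ occ) :
    naplesStep n 1 occ a b = some a := by
  simp [naplesStep, h]

lemma naplesStep_back_free {n a : ℕ} {occ : Finset ℕ} (ha : a ∈ occ) (h2 : 2 ≤ a)
    (h3 : a - 1 ∉ occ) : naplesStep n 1 occ a true = some (a - 1) := by
  unfold naplesStep
  simp only [ha, not_true_eq_false, if_false, if_true]
  have hmax : max (a - 1) 1 = a - 1 := by omega
  have hmin : min 1 (a - 1) = 1 := by omega
  rw [hmax, hmin, List.range'_one]
  simp [firstFree, List.find?, h3]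

lemma naplesStep_fwd {n a : ℕ} {occ : Finset ℕ} (ha : a ∈ occ) (h2 : a ≤ 1 ∨ a - 1 ∈ occ) :
    naplesStep n 1 occ a true = firstFree occ (List.range' (a + 1) (n - a)) := by
  unfold naplesStep
  simp only [ha, not_true_eq_false, if_false, if_true]
  have : firstFree occ ((List.range' (max (a - 1) 1) (min 1 (a - 1))).reverse) = none := by
    rcases le_or_gt a 1 with h1 | h1
    · have : min 1 (a - 1) = 0 := by omega
      simp [this, firstFree]
    · have hmem : a - 1 ∈ occ := by
        rcases h2 with h2 | h2
        · omega
        · exact h2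
      have hmax : max (a - 1) 1 = a - 1 := by omega
      have hmin : min 1 (a - 1) = 1 := by omega
      rw [hmax, hmin, List.range'_one]
      simp [firstFree, List.find?, hmem]
  rw [this]




/-- Domination invariant between the all-back run (A) and an arbitrary run (B). -/
def Dom (n : ℕ) (A B : Finset ℕ) : Prop :=
  A ⊆ Finset.Icc 1 n ∧ B ⊆ Finset.Icc 1 n ∧ ∀ j, cnt j A ≤ cnt j B

lemma sB_props {n a : ℕ} {B : Finset ℕ} {bB : Bool} {sB : ℕ}
    (hB : naplesStep n 1 B a bB = some sB) (ha1 : 1 ≤ a) (han : a ≤ n) :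
    sB ∉ B ∧ a - 1 ≤ sB ∧ sB ≤ n ∧ 1 ≤ sB := by
  rcases step_cases hB with ⟨h1, h2⟩ | ⟨h1, h2, h3, h4⟩ | ⟨h1, h2⟩
  · subst h2; exact ⟨h1, by omega, han, ha1⟩
  · subst h3; exact ⟨h4, by omega, by omega, by omega⟩
  · have := firstFree_some h2
    rw [mem_range'_iff] at this
    exact ⟨this.2, by omega, by omega, by omega⟩

lemma step_dom {n a : ℕ} {bB : Bool} {A B : Finset ℕ} (hD : Dom n A B)
    (ha1 : 1 ≤ a) (han : a ≤ n) {sB : ℕ} (hB : naplesStep n 1 B a bB = some sB) :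
    ∃ sA, naplesStep n 1 A a true = some sA ∧ sA ∉ A ∧ sB ∉ B ∧
      1 ≤ sA ∧ sA ≤ n ∧ 1 ≤ sB ∧ sB ≤ n ∧ Dom n (insert sA A) (insert sB B) := by
  obtain ⟨hAsub, hBsub, hinv⟩ := hD
  obtain ⟨hsBB, hsB1, hsBn, hsB0⟩ := sB_props hB ha1 han
  -- first: produce sA
  have hExist : ∃ sA, naplesStep n 1 A a true = some sA ∧ sA ∉ A ∧ a - 1 ≤ sA ∧ sA ≤ n ∧
      1 ≤ sA ∧
      (sA ∉ ({a, a - 1} : Set ℕ) → (a ∈ A ∧ (a ≤ 1 ∨ a - 1 ∈ A) ∧ a + 1 ≤ sA ∧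
        firstFree A (List.range' (a + 1) (n - a)) = some sA)) := by
    by_cases haA : a ∈ A
    · by_cases hback : 2 ≤ a ∧ a - 1 ∉ A
      · exact ⟨a - 1, naplesStep_back_free haA hback.1 hback.2, hback.2, le_refl _,
          by omega, by omega, fun hc => absurd (by simp) hc⟩
      · have hcase : a ≤ 1 ∨ a - 1 ∈ A := by
          by_cases h1 : a ≤ 1
          · exact Or.inl h1
          · right
            by_contra hc
            exact hback ⟨by omega, hc⟩
        -- forward search must succeed, else B would be stuck too
        cases hff : firstFree A (List.range' (a + 1) (n - a)) with
        | some t =>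
          have hmem := firstFree_some hff
          rw [mem_range'_iff] at hmem
          have hstep : naplesStep n 1 A a true = some t := by
            rw [naplesStep_fwd haA hcase]; exact hff
          exact ⟨t, hstep, hmem.2, by omega, by omega, by omega,
            fun _ => ⟨haA, hcase, by omega, rfl⟩⟩
        | none =>
          exfalso
          -- A contains all of [max (a-1) 1, n]
          set m := max (a - 1) 1 with hm
          have hAfull : ∀ x, m ≤ x → x < n + 1 → x ∈ A := by
            intro x hx1 hx2
            rcases lt_or_ge x (a + 1) with h | h
            · have : x = a - 1 ∨ x = a := by omega
              rcases this with h | h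
              · subst h
                rcases hcase with h1 | h1
                · omega
                · exact h1
              · exact h ▸ haA
            · exact firstFree_none hff (by rw [mem_range'_iff]; omega)
          have hmn : m ≤ n + 1 := by omega
          have hzA : cnt (n + 1) A = 0 := cnt_zero hAsub (by omega)
          have hzB : cnt (n + 1) B = 0 := cnt_zero hBsub (by omega)
          have hsplitA := cnt_split hmn A
          have hsplitB := cnt_split hmn B
          have hmidA : mid m (n + 1) A = n + 1 - m := mid_full hAfull
          have hle : mid m (n + 1) B ≤ n + 1 - m := by
            unfold mid
            calc (B.filter _).card ≤ (Finset.Ico m (n + 1)).card := by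
                  apply Finset.card_le_card
                  intro x hx
                  simp only [Finset.mem_filter] at hx
                  simp only [Finset.mem_Ico]
                  omega
              _ = n + 1 - m := Nat.card_Ico _ _
          have h2 := hinv m
          have hmidB : mid m (n + 1) B = n + 1 - m := by omega
          have hBfull : ∀ x, m ≤ x → x < n + 1 → x ∈ B := by
            have hsub : B.filter (fun x => m ≤ x ∧ x < n + 1) ⊆ Finset.Ico m (n + 1) := by
              intro x hx
              simp only [Finset.mem_filter] at hx
              simp [Finset.mem_Ico]; omega
            have heq := Finset.eq_of_subset_of_card_le hsub
              (by rw [Nat.card_Ico]; exact le_of_eq hmidB.symm)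
            intro x hx1 hx2
            have : x ∈ B.filter (fun x => m ≤ x ∧ x < n + 1) := by
              rw [heq]; simp [Finset.mem_Ico]; omega
            exact (Finset.mem_filter.mp this).1
          -- but then B's step must fail
          rcases step_cases hB with ⟨h1, _⟩ | ⟨_, h2, _, h4⟩ | ⟨_, h2⟩
          · exact h1 (hBfull a (by omega) (by omega))
          · exact h4 (hBfull (a - 1) (by omega) (by omega))
          · have := firstFree_some h2
            rw [mem_range'_iff] at this
            exact this.2 (hBfull sB (by omega) (by omega))
    · exact ⟨a, naplesStep_free haA, haA, by omega, han, ha1, fun hc => absurd (by simp) hc⟩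
  obtain ⟨sA, hstepA, hsAA, hsA1, hsAn, hsA0, hfwdA⟩ := hExist
  refine ⟨sA, hstepA, hsAA, hsBB, hsA0, hsAn, hsB0, hsBn, ?_, ?_, ?_⟩
  · exact Finset.insert_subset (by simp [Finset.mem_Icc]; omega) hAsub
  · exact Finset.insert_subset (by simp [Finset.mem_Icc]; omega) hBsub
  · intro j
    rw [cnt_insert hsAA, cnt_insert hsBB]
    by_cases hj1 : j ≤ sB
    · have := hinv j
      split_ifs <;> omega
    · by_cases hj2 : sA < j
      · have := hinv j
        split_ifs <;> omega
      · -- sB < j ≤ sA : need strict inequality cnt j A < cnt j B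
        have hkey : cnt j A < cnt j B := by
          by_cases h : sA ∈ ({a, a - 1} : Set ℕ)
          · -- sA ∈ {a, a-1}
            simp only [Set.mem_insert_iff, Set.mem_singleton_iff] at h
            rcases h with h | h
            · -- sA = a, so sB < j ≤ a and sB ≥ a - 1: hence j = a
              have hja : j = a := by omega
              have haB : a ∈ B := by
                by_contra hc
                rw [naplesStep_free hc] at hB
                have : a = sB := by injection hB
                omega
              have haA2 : a ∉ A := h ▸ hsAA
              have e1 := cnt_split (show a ≤ a + 1 by omega) A
              have e2 := cnt_split (show a ≤ a + 1 by omega) B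
              have h3 := hinv (a + 1)
              have h4 : mid a (a + 1) A ≤ a + 1 - a - 1 :=
                mid_hole (le_refl a) (by omega) haA2
              have h5 : 1 ≤ mid a (a + 1) B := by
                have hmem : a ∈ B.filter (fun x => a ≤ x ∧ x < a + 1) := by
                  simp [haB]
                exact Finset.card_pos.mpr ⟨a, hmem⟩
              rw [hja]
              omega
            · -- sA = a - 1: impossible since sB ≥ a - 1 and sB < j ≤ sA
              omega
          · -- forward case
            obtain ⟨haA, hcase, hsAa, hffA⟩ := hfwdA h
            have hAseg : ∀ x, a + 1 ≤ x → x < sA → x ∈ A :=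
              firstFree_range'_before (n - a) (a + 1) hffA
            set b := min a sB with hb
            have hbj : b ≤ j := by omega
            apply cnt_lt hbj (hinv b)
            have hmidA : mid b j A = j - b := by
              apply mid_full
              intro x hx1 hx2
              rcases lt_or_ge x (a + 1) with h | h
              · have : x = a - 1 ∨ x = a := by omega
                rcases this with h | h
                · subst h
                  rcases hcase with h1 | h1
                  · omega
                  · exact h1
                · exact h ▸ haA
              · exact hAseg x h (by omega)
            have hmidB : mid b j B ≤ j - b - 1 := mid_hole (by omega) (by omega) hsBB
            omega
        split_ifs <;> omega
    
lemma runPark_cons (step : Finset ℕ → ℕ → Bool → Option ℕ) (a : ℕ) (b : Bool)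
    (rest : List (ℕ × Bool)) (occ : Finset ℕ) :
    runPark step ((a, b) :: rest) occ =
      match step occ a b with
      | none => false
      | some s => runPark step rest (insert s occ) := rfl

lemma run_dom (n : ℕ) : ∀ (l : List (ℕ × Bool)) (A B : Finset ℕ), Dom n A B →
    (∀ x ∈ l, 1 ≤ x.1 ∧ x.1 ≤ n) →
    runPark (naplesStep n 1) l B = true →
    runPark (naplesStep n 1) (l.map (fun x => (x.1, true))) A = true := by
  intro l
  induction l with
  | nil => intro A B _ _ _; simp [runPark]
  | cons hd tl ih =>
    intro A B hD hmem hrun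
    obtain ⟨a, bB⟩ := hd
    rw [runPark_cons] at hrun
    cases hB : naplesStep n 1 B a bB with
    | none => rw [hB] at hrun; exact absurd hrun (by simp)
    | some sB =>
      rw [hB] at hrun
      have ha := hmem (a, bB) (by simp)
      obtain ⟨sA, hstepA, _, _, _, _, _, _, hD'⟩ := step_dom hD ha.1 ha.2 hB
      rw [List.map_cons, runPark_cons, hstepA]
      exact ih (insert sA A) (insert sB B) hD'
        (fun x hx => hmem x (by simp [hx])) hrun

lemma dom_empty (n : ℕ) : Dom n ∅ ∅ :=
  ⟨Finset.empty_subset _, Finset.empty_subset _, fun _ => le_refl _⟩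

lemma parks_to_naples {n : ℕ} (α : Fin n → ℕ) (hα : ∀ i, 1 ≤ α i ∧ α i ≤ n)
    (b : Fin n → Bool) (h : parksNaples n 1 α b = true) : naplesParks n α = true := by
  unfold parksNaples at h
  unfold naplesParks parksNaples
  have hmap : (List.ofFn (fun i => (α i, b i))).map (fun x => (x.1, true)) =
      List.ofFn (fun i => (α i, true)) := by
    rw [List.map_ofFn]
    rfl
  rw [← hmap]
  refine run_dom n _ ∅ ∅ (dom_empty n) ?_ h
  intro x hx
  rw [List.mem_ofFn] at hx
  obtain ⟨i, hi⟩ := hx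
  rw [← hi]
  exact hα i

end Stmt6Aux

/-- `α` parks with positive probability in the random 1-Naples model with `p = 1/2` iff
`α` is a 1-Naples parking function. -/
theorem stmt6 (n : ℕ) (hn : 0 < n) (α : Fin n → Fin n) :
    0 < probNaples n 1 (1/2) (fun i => (α i).1 + 1) ↔
      naplesParks n (fun i => (α i).1 + 1) = true := by
  set α' : Fin n → ℕ := fun i => (α i).1 + 1 with hα'
  have hα : ∀ i, 1 ≤ α' i ∧ α' i ≤ n := by
    intro i
    have h2 := (α i).2
    simp only [hα']
    omega
  constructor
  · intro hpos
    by_contra hnp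
    have hall : ∀ b : Fin n → Bool, parksNaples n 1 α' b = false := by
      intro b
      by_contra hb
      rw [Bool.not_eq_false] at hb
      exact hnp (Stmt6Aux.parks_to_naples α' hα b hb)
    have hzero : probNaples n 1 (1/2) α' = 0 := by
      unfold probNaples
      apply Finset.sum_eq_zero
      intro b _
      rw [hall b]
      simp
    rw [hzero] at hpos
    exact lt_irrefl 0 hpos
  · intro hnp
    unfold probNaples
    apply Finset.sum_pos'
    · intro b _
      apply mul_nonneg
      · apply Finset.prod_nonneg
        intro i _
        split_ifs <;> norm_num
      · split_ifs <;> norm_num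
    · refine ⟨fun _ => true, Finset.mem_univ _, ?_⟩
      have hparks : parksNaples n 1 α' (fun _ => true) = true := hnp
      rw [hparks]
      simp only [if_true, mul_one]
      apply Finset.prod_pos
      intro i _
      norm_num
end

section
/- If α is the constant tuple (2,2,...,2) of length n ≥ 2, then g(α) = 2^{n−1} − 1; i.e., the only choice sequence under which α fails to park is β = (1,1,...,1). -/
lemma ff_Icc (t j st len : ℕ) (ht : t ≤ st) (hst : st ≤ j + 1) :
    firstFree (Finset.Icc t j) (List.range' st len) =
      if j + 1 < st + len then some (j + 1) else none := by
  induction len generalizing st with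
  | zero =>
    rw [List.range'_zero]
    unfold firstFree
    rw [List.find?_nil, if_neg (by omega)]
  | succ k ih =>
    rw [List.range'_succ]
    unfold firstFree
    by_cases h : st ≤ j
    · rw [List.find?_cons_of_neg (by simp [Finset.mem_Icc]; omega)]
      have := ih (st + 1) (by omega) (by omega)
      unfold firstFree at this
      rw [this]
      have e : st + 1 + k = st + (k + 1) := by omega
      rw [e]
    · rw [List.find?_cons_of_pos (by simp [Finset.mem_Icc]; omega)]
      have : st = j + 1 := by omega
      rw [if_pos (by omega), this]

lemma ff_one_A (j : ℕ) : firstFree (Finset.Icc 2 j) [1] = some 1 := by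
  simp [firstFree, Finset.mem_Icc]

lemma ff_one_B (m : ℕ) (hm : 1 ≤ m) : firstFree (Finset.Icc 1 m) [1] = none := by
  simp [firstFree, Finset.mem_Icc, hm]
  omega

lemma backlist : (List.range' (max (2 - 1) 1) (min 1 (2 - 1))).reverse = [1] := by decide

lemma stepA (n j : ℕ) (hj : 2 ≤ j) (c : Bool) :
    naplesStep n 1 (Finset.Icc 2 j) 2 c =
      if c then some 1 else firstFree (Finset.Icc 2 j) (List.range' 3 (n - 2)) := by
  have h2 : (2 : ℕ) ∈ Finset.Icc 2 j := by simp [Finset.mem_Icc]; omega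
  rw [naplesStep, if_neg (by simp [h2])]
  cases c with
  | false => rfl
  | true => simp [backlist, ff_one_A]

lemma stepB (n m : ℕ) (hm : 2 ≤ m) (c : Bool) :
    naplesStep n 1 (Finset.Icc 1 m) 2 c =
      firstFree (Finset.Icc 1 m) (List.range' 3 (n - 2)) := by
  have h2 : (2 : ℕ) ∈ Finset.Icc 1 m := by simp [Finset.mem_Icc]; omega
  rw [naplesStep, if_neg (by simp [h2])]
  cases c with
  | false => rfl
  | true => simp [backlist, ff_one_B m (by omega)]

lemma runPark_some (step : Finset ℕ → ℕ → Bool → Option ℕ) (a : ℕ) (b : Bool)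
    (rest : List (ℕ × Bool)) (occ : Finset ℕ) (s : ℕ) (h : step occ a b = some s) :
    runPark step ((a, b) :: rest) occ = runPark step rest (insert s occ) := by
  rw [runPark, h]

lemma runPark_none (step : Finset ℕ → ℕ → Bool → Option ℕ) (a : ℕ) (b : Bool)
    (rest : List (ℕ × Bool)) (occ : Finset ℕ) (h : step occ a b = none) :
    runPark step ((a, b) :: rest) occ = false := by
  rw [runPark, h]

lemma insert_Icc_top (t m : ℕ) (h : t ≤ m + 1) :
    insert (m + 1) (Finset.Icc t m) = Finset.Icc t (m + 1) := by
  ext x; simp [Finset.mem_Icc]; omega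

lemma insert_one_Icc (j : ℕ) (h : 1 ≤ j) :
    insert 1 (Finset.Icc 2 j) = Finset.Icc 1 j := by
  ext x; simp [Finset.mem_Icc]; omega

lemma lemB (n : ℕ) (bs : List Bool) : ∀ m, 2 ≤ m → m + bs.length = n →
    runPark (naplesStep n 1) (bs.map (fun c => (2, c))) (Finset.Icc 1 m) = true := by
  induction bs with
  | nil => intro m _ _; rfl
  | cons c bs ih =>
    intro m hm hlen
    rw [List.map_cons, runPark_some _ _ _ _ _ (m + 1)
      (by rw [stepB n m hm c, ff_Icc 1 m 3 (n - 2) (by omega) (by omega),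
            if_pos (by simp at hlen; omega)])]
    rw [insert_Icc_top 1 m (by omega)]
    exact ih (m + 1) (by omega) (by simp at hlen ⊢; omega)

lemma lemA (n : ℕ) (bs : List Bool) : ∀ j, 2 ≤ j → j ≤ n → j + bs.length = n + 1 →
    runPark (naplesStep n 1) (bs.map (fun c => (2, c))) (Finset.Icc 2 j) = bs.any id := by
  induction bs with
  | nil => intro j h1 h2 h3; simp at h3; omega
  | cons c bs ih =>
    intro j hj hjn hlen
    cases c with
    | true =>
      rw [List.map_cons, runPark_some _ _ _ _ _ 1 (by rw [stepA n j hj true]; simp)]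
      rw [insert_one_Icc j (by omega)]
      rw [lemB n bs j (by omega) (by simp at hlen; omega)]
      simp
    | false =>
      have hstep : naplesStep n 1 (Finset.Icc 2 j) 2 false =
          if j + 1 < 3 + (n - 2) then some (j + 1) else none := by
        rw [stepA n j hj false, if_neg (by simp),
          ff_Icc 2 j 3 (n - 2) (by omega) (by omega)]
      by_cases h : j < n
      · rw [List.map_cons, runPark_some _ _ _ _ _ (j + 1)
          (by rw [hstep, if_pos (by omega)])]
        rw [insert_Icc_top 2 j (by omega)]
        rw [ih (j + 1) (by omega) (by omega) (by simp at hlen ⊢; omega)]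
        simp
      · rw [List.map_cons, runPark_none _ _ _ _ _ (by rw [hstep, if_neg (by omega)])]
        have hb : bs.length = 0 := by simp at hlen; omega
        rw [List.length_eq_zero_iff.mp hb]
        simp

lemma key (m : ℕ) (β : Fin (m + 1) → Bool) :
    (parksUnder (m + 2) (fun _ => 2) β = true) ↔ β ≠ fun _ => true := by
  show (runPark (naplesStep (m + 2) 1)
      (List.ofFn (fun i : Fin (m + 2) => ((2 : ℕ),
        if h : 0 < i.1 then !(β ⟨i.1 - 1, by have := i.2; omega⟩) else false))) ∅ = true)
      ↔ _
  rw [List.ofFn_succ]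
  rw [runPark_some _ _ _ _ _ 2 (by simp [naplesStep])]
  have e0 : insert 2 (∅ : Finset ℕ) = Finset.Icc 2 2 := by ext x; simp [Finset.mem_Icc]
  have e1 : (List.ofFn fun i : Fin (m + 1) =>
      ((fun i : Fin (m + 2) => ((2 : ℕ),
        if h : 0 < i.1 then !(β ⟨i.1 - 1, by have := i.2; omega⟩) else false)) i.succ))
      = (List.ofFn fun i : Fin (m + 1) => !β i).map (fun c => (2, c)) := by
    rw [List.map_ofFn]
    congr 1
  rw [e0, e1, lemA (m + 2) _ 2 (by omega) (by omega) (by simp; omega)]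
  simp [List.any_eq_true, List.mem_ofFn, funext_iff]
  exact (Fin.exists_fin_succ (P := fun x => β x = false)).symm


/-- For the constant tuple `(2,2,…,2)` of length `n ≥ 2`, `g = 2^(n-1) - 1`; the unique
failing choice sequence is the all-ones one. -/
theorem stmt8 (n : ℕ) (hn : 2 ≤ n) :
    g n (fun _ => 2) = 2 ^ (n - 1) - 1 ∧
    ∀ β : Fin (n - 1) → Bool,
      parksUnder n (fun _ => 2) β = false ↔ β = fun _ => true := by
  obtain ⟨m, rfl⟩ : ∃ m, n = m + 2 := ⟨n - 2, by omega⟩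
  have key' : ∀ β : Fin (m + 2 - 1) → Bool,
      (parksUnder (m + 2) (fun _ => 2) β = true) ↔ β ≠ fun _ => true := fun β => key m β
  constructor
  · have hfil : (Finset.univ.filter
        (fun β : Fin (m + 2 - 1) → Bool => parksUnder (m + 2) (fun _ => 2) β = true))
        = Finset.univ.erase (fun _ => true) := by
      ext β
      simp [key' β, Finset.mem_erase]
    rw [g, hfil, Finset.card_erase_of_mem (Finset.mem_univ _), Finset.card_univ]
    simp [Fintype.card_fun]
  · intro β
    rw [← Bool.not_eq_true, key' β, not_not]
end
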